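/- arXiv:1002.1227 — 2 statements merged into one kernel-verified Lean document; each statement's English description precedes it below -/
import Mathlib

section
/- (Finite-volume generalized Peierls–Griffiths bound.) Consider the zero-field Ising model on a finite connected simple graph G = (V,E) with couplings J(e) ≥ J_min > 0 at inverse temperature β > 0. The Gibbs expectation of the modulus of the magnetization satisfies E_β[ |M| ] ≥ 1 − (4/|V|) Σ_{p∈V} Σ_{b=1}^{|E|} μ^p(b) · e^{−2 β J_min b}. -/
open scoped BigOperators Classical

namespace PG

variable {V : Type*}

/-- The product of the spins at the two endpoints of an unordered pair. -/
def spinProd (σ : V → ℤ) : Sym2 V → ℤ :=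
  Sym2.lift ⟨fun i j => σ i * σ j, fun i j => mul_comm (σ i) (σ j)⟩

/-- The spins at the two endpoints of an unordered pair disagree. -/
def Disagrees (σ : V → ℤ) : Sym2 V → Prop :=
  Sym2.lift ⟨fun i j => σ i ≠ σ j, fun i j => propext ne_comm⟩

/-- The disagreement edge set D(σ) of a spin configuration. -/
def disagreeSet (G : SimpleGraph V) (σ : V → ℤ) : Set (Sym2 V) :=
  {e | e ∈ G.edgeSet ∧ Disagrees σ e}

/-- A spin configuration takes values ±1. -/
def IsSpin (σ : V → ℤ) : Prop := ∀ v, σ v = 1 ∨ σ v = -1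

/-- `B` is a border of `G` with sides `P₁`, `P₂`. -/
structure IsBorderWith (G : SimpleGraph V) (B : Set (Sym2 V)) (P₁ P₂ : Set V) : Prop where
  disj : Disjoint P₁ P₂
  cover : P₁ ∪ P₂ = Set.univ
  ne₁ : P₁.Nonempty
  ne₂ : P₂.Nonempty
  conn₁ : (G.induce P₁).Connected
  conn₂ : (G.induce P₂).Connected
  eq_edges : B = {e | e ∈ G.edgeSet ∧ ∃ i ∈ P₁, ∃ j ∈ P₂, e = s(i, j)}

/-- `B` is a border of `G`. -/
def IsBorder (G : SimpleGraph V) (B : Set (Sym2 V)) : Prop :=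
  ∃ P₁ P₂ : Set V, IsBorderWith G B P₁ P₂

/-- `p` is internal to the border `B`: it lies on the side with no more vertices. -/
def InternalTo (G : SimpleGraph V) (p : V) (B : Set (Sym2 V)) : Prop :=
  ∃ P₁ P₂ : Set V, IsBorderWith G B P₁ P₂ ∧ p ∈ P₁ ∧ P₁.ncard ≤ P₂.ncard

/-- μ^p(b): the number of borders of cardinality `b` to which `p` is internal. -/
noncomputable def mu (G : SimpleGraph V) (p : V) (b : ℕ) : ℕ :=
  {B : Finset (Sym2 V) | B.card = b ∧ InternalTo G p ↑B}.ncard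

/-- The vertex border of `B` on side `P`: endpoints of edges of `B` lying in `P`. -/
def vertexBorder (B : Set (Sym2 V)) (P : Set V) : Set V :=
  {v | v ∈ P ∧ ∃ e ∈ B, v ∈ e}

/-- Encoding of spin configurations by boolean functions. -/
def toSpin (τ : V → Bool) : V → ℤ := fun v => if τ v then 1 else -1

/-- The zero-field Ising Hamiltonian. -/
noncomputable def hamiltonian [Fintype V] (G : SimpleGraph V) [Fintype G.edgeSet]
    (J : Sym2 V → ℝ) (σ : V → ℤ) : ℝ :=
  -∑ e ∈ G.edgeFinset, J e * (spinProd σ e : ℝ)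

/-- The partition function Z at inverse temperature β. -/
noncomputable def partitionZ [Fintype V] [DecidableEq V] (G : SimpleGraph V)
    [Fintype G.edgeSet] (J : Sym2 V → ℝ) (β : ℝ) : ℝ :=
  ∑ τ : V → Bool, Real.exp (-β * hamiltonian G J (toSpin τ))

/-- Gibbs expectation of an observable `f` at inverse temperature β. -/
noncomputable def gibbsExp [Fintype V] [DecidableEq V] (G : SimpleGraph V)
    [Fintype G.edgeSet] (J : Sym2 V → ℝ) (β : ℝ) (f : (V → ℤ) → ℝ) : ℝ :=
  (∑ τ : V → Bool, f (toSpin τ) * Real.exp (-β * hamiltonian G J (toSpin τ))) /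
    partitionZ G J β

/-- Gibbs probability of an event `S` at inverse temperature β. -/
noncomputable def gibbsProb [Fintype V] [DecidableEq V] (G : SimpleGraph V)
    [Fintype G.edgeSet] (J : Sym2 V → ℝ) (β : ℝ) (S : (V → ℤ) → Prop) : ℝ :=
  gibbsExp G J β (fun σ => if S σ then 1 else 0)

/-- The magnetization M(σ). -/
noncomputable def magn [Fintype V] (σ : V → ℤ) : ℝ :=
  (∑ i, (σ i : ℝ)) / (Fintype.card V : ℝ)

/-- The external vertex boundary of a set of vertices. -/
def extBoundary (G : SimpleGraph V) (A : Set V) : Set V :=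
  {v | v ∉ A ∧ ∃ a ∈ A, G.Adj v a}

/-- A (C,d)-isoperimetric inequality. -/
def IsoIneq (G : SimpleGraph V) (C d : ℝ) : Prop :=
  ∀ A : Set V, A.Finite → A.Nonempty → A ≠ Set.univ →
    (extBoundary G A).Infinite ∨
      C * (A.ncard : ℝ) ^ ((d - 1) / d) ≤ ((extBoundary G A).ncard : ℝ)

/-- `G` has growth exponent `df`: balls of radius `r ≥ 1` contain at most `r^df` vertices. -/
def HasGrowth (G : SimpleGraph V) (df : ℝ) : Prop :=
  ∀ p : V, ∀ r : ℕ, 1 ≤ r → (({q : V | G.dist p q ≤ r}).ncard : ℝ) ≤ (r : ℝ) ^ df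

/-- ν_q(b): the number of vertex sets containing `q` arising as a vertex border of a
border of cardinality `b`. -/
noncomputable def nu (G : SimpleGraph V) (q : V) (b : ℕ) : ℕ :=
  {S : Set V | q ∈ S ∧ ∃ (B : Finset (Sym2 V)) (P₁ P₂ : Set V),
    IsBorderWith G ↑B P₁ P₂ ∧ B.card = b ∧ S = vertexBorder ↑B P₂}.ncard

/-! ### auxiliary component machinery -/

/-- Reachability within a vertex set `S`. -/
def RIn (G : SimpleGraph V) (S : Set V) : V → V → Prop :=
  Relation.ReflTransGen (fun x y => G.Adj x y ∧ x ∈ S ∧ y ∈ S)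

/-- The connected component of `p` within the set `S`. -/
def comp (G : SimpleGraph V) (S : Set V) (p : V) : Set V := {v | RIn G S p v}

lemma mem_comp_self (G : SimpleGraph V) (S : Set V) (p : V) : p ∈ comp G S p :=
  Relation.ReflTransGen.refl

lemma comp_subset (G : SimpleGraph V) {S : Set V} {p : V} (hp : p ∈ S) :
    comp G S p ⊆ S := by
  intro v hv
  induction hv with
  | refl => exact hp
  | tail _ h _ => exact h.2.2

lemma comp_closed (G : SimpleGraph V) {S : Set V} {p v w : V} (hp : p ∈ S)
    (hv : v ∈ comp G S p) (hw : w ∈ S) (hadj : G.Adj v w) : w ∈ comp G S p :=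
  Relation.ReflTransGen.tail hv ⟨hadj, comp_subset G hp hv, hw⟩

lemma reach_of_mem_comp (G : SimpleGraph V) {S : Set V} {p : V} (hp : p ∈ S)
    {v : V} (hv : v ∈ comp G S p) :
    (G.induce (comp G S p)).Reachable ⟨p, mem_comp_self G S p⟩ ⟨v, hv⟩ := by
  induction hv with
  | refl => rfl
  | @tail b c hb hbc ih =>
      have hbmem : b ∈ comp G S p := hb
      have hcmem : c ∈ comp G S p := Relation.ReflTransGen.tail hb hbc
      have hadj : (G.induce (comp G S p)).Adj ⟨b, hbmem⟩ ⟨c, hcmem⟩ := hbc.1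
      exact ih.trans hadj.reachable

lemma comp_conn (G : SimpleGraph V) {S : Set V} {p : V} (hp : p ∈ S) :
    (G.induce (comp G S p)).Connected := by
  have : Nonempty (comp G S p) := ⟨⟨p, mem_comp_self G S p⟩⟩
  exact SimpleGraph.Connected.mk (fun x y =>
    ((reach_of_mem_comp G hp x.2).symm.trans (reach_of_mem_comp G hp y.2)))
  

lemma reachable_mono (G : SimpleGraph V) {S T : Set V} (h : S ⊆ T) {a b : S}
    (hr : (G.induce S).Reachable a b) :
    (G.induce T).Reachable ⟨a, h a.2⟩ ⟨b, h b.2⟩ :=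
  hr.map ⟨Set.inclusion h, fun hadj => hadj⟩

/-- Every vertex outside `C` can reach `p₀` outside `C`. -/
private lemma reach_in_compl (G : SimpleGraph V) {P : Set V}
    (hP : (G.induce P).Connected) {c₀ : V} (hc₀ : c₀ ∈ Pᶜ)
    (hPC : P ⊆ (comp G Pᶜ c₀)ᶜ)
    {p₀ : V} (hp₀ : p₀ ∈ P) (hp₀C : p₀ ∈ (comp G Pᶜ c₀)ᶜ) :
    ∀ {u : V}, G.Walk u p₀ → ∀ hu : u ∈ (comp G Pᶜ c₀)ᶜ,
      (G.induce (comp G Pᶜ c₀)ᶜ).Reachable ⟨u, hu⟩ ⟨p₀, hp₀C⟩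
  | _, SimpleGraph.Walk.nil, _ => SimpleGraph.Reachable.refl _
  | u, @SimpleGraph.Walk.cons _ _ _ v _ hadj W, hu => by
      by_cases huP : u ∈ P
      · exact reachable_mono G hPC (hP.preconnected ⟨u, huP⟩ ⟨p₀, hp₀⟩)
      · have hvC : v ∈ (comp G Pᶜ c₀)ᶜ := by
          intro hvC
          exact hu (comp_closed G hc₀ hvC huP hadj.symm)
        have hadj' : (G.induce (comp G Pᶜ c₀)ᶜ).Adj ⟨u, hu⟩ ⟨v, hvC⟩ := hadj
        exact hadj'.reachable.trans (reach_in_compl G hP hc₀ hPC hp₀ hp₀C W hvC)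

/-- The complement of a component of the complement of a connected set is connected. -/
lemma conn_compl (G : SimpleGraph V) (hG : G.Connected) {P : Set V}
    (hP : (G.induce P).Connected) {c₀ : V} (hc₀ : c₀ ∈ Pᶜ) :
    (G.induce (comp G Pᶜ c₀)ᶜ).Connected := by
  set C := comp G Pᶜ c₀ with hC
  have hPC : P ⊆ Cᶜ := by
    intro x hx hxC
    exact comp_subset G hc₀ hxC hx
  obtain ⟨⟨p₀, hp₀⟩⟩ := hP.nonempty
  have hp₀C : p₀ ∈ Cᶜ := hPC hp₀
  have : Nonempty (Cᶜ : Set V) := ⟨⟨p₀, hp₀C⟩⟩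
  exact SimpleGraph.Connected.mk (fun x y =>
    (reach_in_compl G hP hc₀ hPC hp₀ hp₀C (hG.preconnected x.1 p₀).some x.2).trans
      (reach_in_compl G hP hc₀ hPC hp₀ hp₀C (hG.preconnected y.1 p₀).some y.2).symm)

private lemma cross_of_walk (G : SimpleGraph V) {C : Set V} {i₀ : V} (hi₀ : i₀ ∈ Cᶜ) :
    ∀ {u : V}, G.Walk u i₀ → u ∈ C → ∃ i j, i ∈ Cᶜ ∧ j ∈ C ∧ G.Adj i j
  | _, SimpleGraph.Walk.nil, hu => absurd hu hi₀
  | u, @SimpleGraph.Walk.cons _ _ _ v _ hadj W, hu => by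
      by_cases hvC : v ∈ C
      · exact cross_of_walk G hi₀ W hvC
      · exact ⟨v, u, hvC, hu, hadj.symm⟩

/-- In a connected graph every nontrivial vertex set has a crossing edge. -/
lemma exists_cross (G : SimpleGraph V) (hG : G.Connected) {C : Set V}
    (hC : C.Nonempty) (hCc : Cᶜ.Nonempty) :
    ∃ i j, i ∈ Cᶜ ∧ j ∈ C ∧ G.Adj i j := by
  obtain ⟨j₀, hj₀⟩ := hC
  obtain ⟨i₀, hi₀⟩ := hCc
  exact cross_of_walk G hi₀ (hG.preconnected j₀ i₀).some hj₀

lemma IsBorderWith.symm {G : SimpleGraph V} {B : Set (Sym2 V)} {P₁ P₂ : Set V}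
    (h : IsBorderWith G B P₁ P₂) : IsBorderWith G B P₂ P₁ where
  disj := h.disj.symm
  cover := Set.union_comm P₂ P₁ ▸ h.cover
  ne₁ := h.ne₂
  ne₂ := h.ne₁
  conn₁ := h.conn₂
  conn₂ := h.conn₁
  eq_edges := by
    rw [h.eq_edges]
    ext e
    constructor
    · rintro ⟨he, i, hi, j, hj, rfl⟩
      exact ⟨he, j, hj, i, hi, Sym2.eq_swap⟩
    · rintro ⟨he, i, hi, j, hj, rfl⟩
      exact ⟨he, j, hj, i, hi, Sym2.eq_swap⟩

lemma toSpin_ne_iff (τ : V → Bool) (i j : V) : toSpin τ i ≠ toSpin τ j ↔ τ i ≠ τ j := by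
  unfold toSpin
  cases hi : τ i <;> cases hj : τ j <;> simp

/-- The key construction: given a spin component `P₁ = comp G T p₀` and a component `C`
of its complement, the crossing edges between `Cᶜ` and `C` form a nonempty border
consisting of disagreement edges. -/
lemma border_construction [Fintype V] (G : SimpleGraph V) (hG : G.Connected)
    (τ : V → Bool) (s : Bool) {p₀ : V} (hp₀ : τ p₀ = s)
    {c₀ : V} (hc₀ : c₀ ∈ (comp G {v | τ v = s} p₀)ᶜ) :
    ∃ B : Finset (Sym2 V),
      ↑B ⊆ disagreeSet G (toSpin τ) ∧ B.Nonempty ∧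
      IsBorderWith G ↑B (comp G (comp G {v | τ v = s} p₀)ᶜ c₀)ᶜ
        (comp G (comp G {v | τ v = s} p₀)ᶜ c₀) := by
  classical
  set T : Set V := {v | τ v = s} with hT
  set P₁ : Set V := comp G T p₀ with hP₁
  set C : Set V := comp G P₁ᶜ c₀ with hCdef
  have hp₀T : p₀ ∈ T := hp₀
  have hP₁T : P₁ ⊆ T := comp_subset G hp₀T
  have hCP₁c : C ⊆ P₁ᶜ := comp_subset G hc₀
  have hP₁Cc : P₁ ⊆ Cᶜ := fun x hx hxC => hCP₁c hxC hx
  -- the crossing edge set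
  set B : Finset (Sym2 V) :=
    G.edgeFinset.filter (fun e => ∃ i ∈ (Cᶜ : Set V), ∃ j ∈ C, e = s(i, j)) with hB
  have hBcoe : (↑B : Set (Sym2 V)) =
      {e | e ∈ G.edgeSet ∧ ∃ i ∈ (Cᶜ : Set V), ∃ j ∈ C, e = s(i, j)} := by
    ext e
    simp [hB, SimpleGraph.mem_edgeFinset]
  -- endpoints of crossing edges: the `Cᶜ` endpoint lies in `P₁`
  have hCside : ∀ i j, i ∈ (Cᶜ : Set V) → j ∈ C → G.Adj i j → i ∈ P₁ := by
    intro i j hi hj hadj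
    by_contra hiP
    exact hi (comp_closed G hc₀ hj hiP hadj.symm)
  have hdisag : ∀ i j, i ∈ (Cᶜ : Set V) → j ∈ C → G.Adj i j → τ i ≠ τ j := by
    intro i j hi hj hadj
    have hiP : i ∈ P₁ := hCside i j hi hj hadj
    have hiT : τ i = s := hP₁T hiP
    intro hEq
    have hjT : j ∈ T := by
      show τ j = s
      rw [← hEq]; exact hiT
    exact hCP₁c hj (comp_closed G hp₀T hiP hjT hadj)
  refine ⟨B, ?_, ?_, ?_⟩
  · -- disagreement
    intro e he
    rw [hBcoe] at he
    obtain ⟨heE, i, hi, j, hj, rfl⟩ := he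
    have hadj : G.Adj i j := heE
    exact ⟨heE, (toSpin_ne_iff τ i j).mpr (hdisag i j hi hj hadj)⟩
  · -- nonempty
    have hCne : C.Nonempty := ⟨c₀, mem_comp_self G _ c₀⟩
    have hCcne : (Cᶜ : Set V).Nonempty := ⟨p₀, hP₁Cc (mem_comp_self G _ p₀)⟩
    obtain ⟨i, j, hi, hj, hadj⟩ := exists_cross G hG hCne hCcne
    refine ⟨s(i, j), ?_⟩
    rw [hB, Finset.mem_filter]
    exact ⟨SimpleGraph.mem_edgeFinset.mpr hadj, i, hi, j, hj, rfl⟩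
  · -- border structure
    refine ⟨disjoint_compl_left, Set.compl_union_self C, ⟨p₀, hP₁Cc (mem_comp_self G _ p₀)⟩,
      ⟨c₀, mem_comp_self G _ c₀⟩, ?_, comp_conn G hc₀, hBcoe⟩
    exact conn_compl G hG (comp_conn G hp₀T) hc₀


/-- `p` is internal to some nonempty border consisting of disagreement edges of `τ`. -/
def Internal (G : SimpleGraph V) (τ : V → Bool) (p : V) : Prop :=
  ∃ B : Finset (Sym2 V), ↑B ⊆ disagreeSet G (toSpin τ) ∧ B.Nonempty ∧ InternalTo G p ↑B

lemma ncard_compl_add [Fintype V] (A : Set V) : A.ncard + Aᶜ.ncard = Fintype.card V := by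
  rw [Set.ncard_add_ncard_compl]
  exact Nat.card_eq_fintype_card

lemma key_count [Fintype V] (G : SimpleGraph V) (hG : G.Connected) (τ : V → Bool) (s : Bool)
    (hmin : 2 * ({v | τ v = s}.ncard) ≤ Fintype.card V)
    (hne : {v | τ v = s}.Nonempty) :
    {v | τ v = s}.ncard ≤ {p | Internal G τ p}.ncard := by
  classical
  set n := Fintype.card V with hn
  set T : Set V := {v | τ v = s} with hT
  by_cases hbad : ∃ p₀, τ p₀ = s ∧
      ∀ c₀ ∈ (comp G T p₀)ᶜ, 2 * (comp G (comp G T p₀)ᶜ c₀).ncard < n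
  · -- some spin component has only small complementary components:
    -- then all of the complement of that spin component is internal
    obtain ⟨p₀, hp₀, hsmall⟩ := hbad
    set P₁ : Set V := comp G T p₀ with hP₁
    have hsub : P₁ᶜ ⊆ {p | Internal G τ p} := by
      intro q hq
      obtain ⟨B, hBD, hBne, hB⟩ := border_construction G hG τ s hp₀ hq
      set C : Set V := comp G P₁ᶜ q with hC
      have hqC : q ∈ C := mem_comp_self G _ q
      have hcard : C.ncard ≤ Cᶜ.ncard := by
        have h1 := ncard_compl_add C
        have h2 : 2 * C.ncard < n := hsmall q hq
        omega
      exact ⟨B, hBD, hBne, C, Cᶜ, hB.symm, hqC, hcard⟩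
    have hTP : T.ncard ≤ P₁ᶜ.ncard := by
      have h1 := ncard_compl_add P₁
      have h2 : P₁.ncard ≤ T.ncard := Set.ncard_le_ncard (comp_subset G hp₀) (Set.toFinite T)
      omega
    exact hTP.trans (Set.ncard_le_ncard hsub (Set.toFinite _))
  · -- every spin component of a minority vertex has a big complementary component:
    -- then each minority vertex is itself internal
    push_neg at hbad
    have hsub : T ⊆ {p | Internal G τ p} := by
      intro p hp
      obtain ⟨c₀, hc₀, hbig⟩ := hbad p hp
      obtain ⟨B, hBD, hBne, hB⟩ := border_construction G hG τ s hp hc₀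
      set P₁ : Set V := comp G T p with hP₁
      set C : Set V := comp G P₁ᶜ c₀ with hC
      have hpC : p ∈ Cᶜ := fun hpc => (comp_subset G hc₀ hpc) (mem_comp_self G _ p)
      have hcard : Cᶜ.ncard ≤ C.ncard := by
        have h1 := ncard_compl_add C
        omega
      exact ⟨B, hBD, hBne, Cᶜ, C, hB, hpC, hcard⟩
    exact Set.ncard_le_ncard hsub (Set.toFinite _)

lemma sum_toSpin [Fintype V] (τ : V → Bool) :
    ∑ i, ((toSpin τ i : ℤ) : ℝ) =
      ({v | τ v = true}.ncard : ℝ) - ({v | τ v = false}.ncard : ℝ) := by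
  classical
  rw [← Finset.sum_filter_add_sum_filter_not Finset.univ (fun i => τ i = true)]
  have hfilter : Finset.univ.filter (fun i => ¬ τ i = true) =
      Finset.univ.filter (fun i => τ i = false) := by
    ext i; simp
  rw [hfilter]
  have h1 : ∀ i ∈ Finset.univ.filter (fun i => τ i = true), ((toSpin τ i : ℤ) : ℝ) = 1 := by
    intro i hi
    simp only [Finset.mem_filter] at hi
    simp [toSpin, hi.2]
  have h2 : ∀ i ∈ Finset.univ.filter (fun i => τ i = false), ((toSpin τ i : ℤ) : ℝ) = -1 := by
    intro i hi
    simp only [Finset.mem_filter] at hi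
    simp [toSpin, hi.2]
  rw [Finset.sum_congr rfl h1, Finset.sum_congr rfl h2]
  have e1 : {v | τ v = true}.ncard = (Finset.univ.filter (fun i => τ i = true)).card := by
    rw [Set.ncard_eq_toFinset_card']
    congr 1
    ext v
    simp
  have e2 : {v | τ v = false}.ncard = (Finset.univ.filter (fun i => τ i = false)).card := by
    rw [Set.ncard_eq_toFinset_card']
    congr 1
    ext v
    simp
  rw [e1, e2, Finset.sum_const, Finset.sum_const]
  simp
  ring

lemma internal_count [Fintype V] (G : SimpleGraph V) (hG : G.Connected) (τ : V → Bool) :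
    (Fintype.card V : ℝ) * (1 - |magn (toSpin τ)|) ≤ 4 * ({p | Internal G τ p}.ncard : ℝ) := by
  classical
  have : Nonempty V := hG.nonempty
  set n := Fintype.card V with hn
  have hnpos : 0 < n := Fintype.card_pos
  have hnR : (0:ℝ) < (n:ℝ) := by exact_mod_cast hnpos
  set a := {v | τ v = true}.ncard with ha
  set b := {v | τ v = false}.ncard with hb
  have hab : a + b = n := by
    have : {v | τ v = false} = {v | τ v = true}ᶜ := by
      ext v; simp
    rw [hb, this]
    exact ncard_compl_add _
  set NI := {p | Internal G τ p}.ncard with hNI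
  have hmagn : magn (toSpin τ) = ((a:ℝ) - b) / n := by
    rw [magn, sum_toSpin, ← hn, ← ha, ← hb]
  have habs : (n:ℝ) * (1 - |magn (toSpin τ)|) = (n:ℝ) - |(a:ℝ) - b| := by
    rw [hmagn, abs_div, abs_of_pos hnR]
    field_simp
  rw [habs]
  have key : min a b ≤ 2 * NI := by
    rcases Nat.eq_zero_or_pos (min a b) with h0 | hpos
    · omega
    · rcases le_total a b with hle | hle
      · have hmin : 2 * a ≤ n := by omega
        have hne : {v | τ v = true}.Nonempty := by
          apply Set.nonempty_of_ncard_ne_zero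
          omega
        have := key_count G hG τ true hmin hne
        omega
      · have hmin : 2 * b ≤ n := by omega
        have hne : {v | τ v = false}.Nonempty := by
          apply Set.nonempty_of_ncard_ne_zero
          omega
        have := key_count G hG τ false hmin hne
        omega
  rcases le_total a b with hle | hle
  · have h1 : |(a:ℝ) - b| = (b:ℝ) - a := by
      rw [abs_sub_comm]
      apply abs_of_nonneg
      have : (a:ℝ) ≤ b := by exact_mod_cast hle
      linarith
    have h2 : min a b = a := min_eq_left hle
    rw [h1]
    have h3 : a ≤ 2 * NI := by omega
    have h4 : ((a:ℝ)) ≤ 2 * NI := by exact_mod_cast h3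
    have h5 : (a:ℝ) + b = n := by exact_mod_cast hab
    linarith
  · have h1 : |(a:ℝ) - b| = (a:ℝ) - b := by
      apply abs_of_nonneg
      have : (b:ℝ) ≤ a := by exact_mod_cast hle
      linarith
    have h3 : b ≤ 2 * NI := by omega
    have h4 : ((b:ℝ)) ≤ 2 * NI := by exact_mod_cast h3
    have h5 : (a:ℝ) + b = n := by exact_mod_cast hab
    rw [h1]
    linarith



/-- Flip the spins on `P`. -/
noncomputable def flip (P : Set V) (τ : V → Bool) : V → Bool := fun v => if v ∈ P then !(τ v) else τ v

lemma flip_flip (P : Set V) (τ : V → Bool) : flip P (flip P τ) = τ := by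
  funext v
  by_cases h : v ∈ P <;> simp [flip, h]

lemma flip_injective (P : Set V) : Function.Injective (flip P) :=
  Function.LeftInverse.injective (g := flip P) (fun τ => flip_flip P τ)

lemma toSpin_flip_mem {P : Set V} {v : V} (h : v ∈ P) (τ : V → Bool) :
    toSpin (flip P τ) v = - toSpin τ v := by
  cases hv : τ v <;> simp [toSpin, flip, h, hv]

lemma toSpin_flip_notMem {P : Set V} {v : V} (h : v ∉ P) (τ : V → Bool) :
    toSpin (flip P τ) v = toSpin τ v := by
  simp [toSpin, flip, h]

lemma spinProd_toSpin_of_ne {τ : V → Bool} {i j : V} (h : τ i ≠ τ j) :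
    spinProd (toSpin τ) s(i, j) = -1 := by
  show toSpin τ i * toSpin τ j = -1
  cases hi : τ i <;> cases hj : τ j <;> simp_all [toSpin]

lemma ham_flip [Fintype V] (G : SimpleGraph V) [DecidableRel G.Adj]
    (J : Sym2 V → ℝ) (Jmin : ℝ) (hJ : ∀ e ∈ G.edgeFinset, Jmin ≤ J e)
    {B : Finset (Sym2 V)} {P₁ P₂ : Set V} (hB : IsBorderWith G ↑B P₁ P₂)
    (τ : V → Bool) (hτ : ↑B ⊆ disagreeSet G (toSpin τ)) :
    hamiltonian G J (toSpin (flip P₁ τ)) + 2 * Jmin * B.card ≤ hamiltonian G J (toSpin τ) := by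
  classical
  set σ := toSpin τ with hσ
  set σ' := toSpin (flip P₁ τ) with hσ'
  have hBsub : B ⊆ G.edgeFinset := by
    intro e he
    have : (e : Sym2 V) ∈ (↑B : Set (Sym2 V)) := he
    rw [hB.eq_edges] at this
    exact SimpleGraph.mem_edgeFinset.mpr this.1
  have hnotmem : ∀ v ∈ P₂, v ∉ P₁ := fun v hv hv1 => Set.disjoint_left.mp hB.disj hv1 hv
  -- edges outside B keep their spin product
  have hsame : ∀ e ∈ G.edgeFinset \ B, spinProd σ' e = spinProd σ e := by
    intro e he
    rw [Finset.mem_sdiff] at he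
    obtain ⟨heE, heB⟩ := he
    induction e using Sym2.ind with
    | _ i j =>
      have hij : s(i, j) ∈ G.edgeSet := SimpleGraph.mem_edgeFinset.mp heE
      have hi : i ∈ P₁ ∪ P₂ := hB.cover.symm ▸ Set.mem_univ i
      have hj : j ∈ P₁ ∪ P₂ := hB.cover.symm ▸ Set.mem_univ j
      show σ' i * σ' j = σ i * σ j
      rcases hi with hi | hi <;> rcases hj with hj | hj
      · rw [hσ', toSpin_flip_mem hi, toSpin_flip_mem hj]; ring
      · exfalso
        apply heB
        have : s(i, j) ∈ (↑B : Set (Sym2 V)) := by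
          rw [hB.eq_edges]; exact ⟨hij, i, hi, j, hj, rfl⟩
        exact this
      · exfalso
        apply heB
        have : s(i, j) ∈ (↑B : Set (Sym2 V)) := by
          rw [hB.eq_edges]; exact ⟨hij, j, hj, i, hi, Sym2.eq_swap⟩
        exact this
      · rw [hσ', toSpin_flip_notMem (hnotmem i hi), toSpin_flip_notMem (hnotmem j hj)]
  -- edges of B flip their spin product from -1 to 1
  have hflip : ∀ e ∈ B, spinProd σ e = -1 ∧ spinProd σ' e = 1 := by
    intro e he
    have heB : (e : Sym2 V) ∈ (↑B : Set (Sym2 V)) := he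
    have heD := hτ heB
    rw [hB.eq_edges] at heB
    obtain ⟨heE, i, hi, j, hj, rfl⟩ := heB
    have hne : τ i ≠ τ j := by
      have : Disagrees σ s(i, j) := heD.2
      exact (toSpin_ne_iff τ i j).mp this
    have h1 : spinProd σ s(i, j) = -1 := spinProd_toSpin_of_ne hne
    refine ⟨h1, ?_⟩
    show σ' i * σ' j = 1
    have e1 : σ' i = - σ i := toSpin_flip_mem hi τ
    have e2 : σ' j = σ j := toSpin_flip_notMem (hnotmem j hj) τ
    have h2 : σ i * σ j = -1 := h1
    rw [e1, e2]
    linarith [h2]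
  -- now compare the two Hamiltonians
  have key1 : ∑ e ∈ G.edgeFinset, J e * (spinProd σ' e : ℝ)
      = ∑ e ∈ G.edgeFinset \ B, J e * (spinProd σ e : ℝ) + ∑ e ∈ B, J e := by
    rw [← Finset.sum_sdiff hBsub]
    congr 1
    · exact Finset.sum_congr rfl (fun e he => by rw [hsame e he])
    · exact Finset.sum_congr rfl (fun e he => by rw [(hflip e he).2]; norm_num)
  have key2 : ∑ e ∈ G.edgeFinset, J e * (spinProd σ e : ℝ)
      = ∑ e ∈ G.edgeFinset \ B, J e * (spinProd σ e : ℝ) + ∑ e ∈ B, (- J e) := by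
    rw [← Finset.sum_sdiff hBsub]
    congr 1
    exact Finset.sum_congr rfl (fun e he => by rw [(hflip e he).1]; norm_num)
  have key3 : 2 * Jmin * (B.card : ℝ) ≤ ∑ e ∈ B, 2 * J e := by
    have := Finset.card_nsmul_le_sum B (fun e => 2 * J e) (2 * Jmin)
      (fun e he => by show 2 * Jmin ≤ 2 * J e; have := hJ e (hBsub he); linarith)
    rw [nsmul_eq_mul] at this
    linarith [this]
  have key4 : ∑ e ∈ B, (2:ℝ) * J e = 2 * ∑ e ∈ B, J e := by rw [Finset.mul_sum]
  have key5 : ∑ e ∈ B, (- J e) = - ∑ e ∈ B, J e := by simp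
  rw [hamiltonian, hamiltonian, key1, key2]
  rw [key5]
  rw [key4] at key3
  linarith

lemma peierls_sum [Fintype V] [DecidableEq V] (G : SimpleGraph V) [DecidableRel G.Adj]
    (J : Sym2 V → ℝ) (Jmin β : ℝ) (hβ : 0 < β)
    (hJ : ∀ e ∈ G.edgeFinset, Jmin ≤ J e)
    {B : Finset (Sym2 V)} {P₁ P₂ : Set V} (hB : IsBorderWith G ↑B P₁ P₂) :
    ∑ τ ∈ Finset.univ.filter (fun τ : V → Bool => ↑B ⊆ disagreeSet G (toSpin τ)),
        Real.exp (-β * hamiltonian G J (toSpin τ))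
      ≤ Real.exp (-2 * β * Jmin * (B.card : ℝ)) * partitionZ G J β := by
  classical
  set c := Real.exp (-2 * β * Jmin * (B.card : ℝ)) with hc
  set S := Finset.univ.filter (fun τ : V → Bool => ↑B ⊆ disagreeSet G (toSpin τ)) with hS
  have step1 : ∀ τ ∈ S, Real.exp (-β * hamiltonian G J (toSpin τ))
      ≤ c * Real.exp (-β * hamiltonian G J (toSpin (flip P₁ τ))) := by
    intro τ hτ
    rw [hS, Finset.mem_filter] at hτ
    have hham := ham_flip G J Jmin hJ hB τ hτ.2
    rw [hc, ← Real.exp_add]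
    apply Real.exp_le_exp.mpr
    nlinarith [hham, hβ]
  calc ∑ τ ∈ S, Real.exp (-β * hamiltonian G J (toSpin τ))
      ≤ ∑ τ ∈ S, c * Real.exp (-β * hamiltonian G J (toSpin (flip P₁ τ))) :=
        Finset.sum_le_sum step1
    _ = c * ∑ τ ∈ S, Real.exp (-β * hamiltonian G J (toSpin (flip P₁ τ))) := by
        rw [Finset.mul_sum]
    _ = c * ∑ τ' ∈ S.image (flip P₁), Real.exp (-β * hamiltonian G J (toSpin τ')) := by
        rw [Finset.sum_image (fun a _ b _ h => flip_injective P₁ h)]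
    _ ≤ c * partitionZ G J β := by
        apply mul_le_mul_of_nonneg_left _ (Real.exp_pos _).le
        rw [partitionZ]
        exact Finset.sum_le_sum_of_subset_of_nonneg (Finset.subset_univ _)
          (fun τ' _ _ => (Real.exp_pos _).le)



lemma ncard_internal_eq [Fintype V] (G : SimpleGraph V) (τ : V → Bool) :
    ({p | Internal G τ p}.ncard : ℝ) = ∑ p : V, (if Internal G τ p then (1:ℝ) else 0) := by
  classical
  rw [Set.ncard_eq_toFinset_card', Set.toFinset_setOf, Finset.card_filter]
  push_cast
  rfl


/-- finite-volume generalized Peierls–Griffiths bound: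
`E_β[|M|] ≥ 1 − (4/|V|) Σ_{p∈V} Σ_{b=1}^{|E|} μ^p(b) · exp (−2 β Jmin b)`. -/
theorem stmt_7 {V : Type*} [Fintype V] [DecidableEq V] (G : SimpleGraph V)
    [DecidableRel G.Adj] (hG : G.Connected)
    (J : Sym2 V → ℝ) (Jmin : ℝ) (hJmin : 0 < Jmin)
    (hJ : ∀ e ∈ G.edgeFinset, Jmin ≤ J e) (β : ℝ) (hβ : 0 < β) :
    gibbsExp G J β (fun σ => |magn σ|) ≥
      1 - (4 / (Fintype.card V : ℝ)) * ∑ p : V, ∑ b ∈ Finset.Icc 1 G.edgeFinset.card,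
        (mu G p b : ℝ) * Real.exp (-2 * β * Jmin * (b : ℝ)) := by
  classical
  have hneV : Nonempty V := hG.nonempty
  have hnpos : (0:ℝ) < (Fintype.card V : ℝ) := by exact_mod_cast Fintype.card_pos
  set w : (V → Bool) → ℝ := fun τ => Real.exp (-β * hamiltonian G J (toSpin τ)) with hw
  have hwpos : ∀ τ, 0 < w τ := fun τ => Real.exp_pos _
  have hZ : partitionZ G J β = ∑ τ : V → Bool, w τ := rfl
  have hZpos : 0 < partitionZ G J β := by
    rw [hZ]; exact Finset.sum_pos (fun τ _ => hwpos τ) Finset.univ_nonempty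
  set K := ∑ p : V, ∑ b ∈ Finset.Icc 1 G.edgeFinset.card,
      (mu G p b : ℝ) * Real.exp (-2 * β * Jmin * (b : ℝ)) with hK
  rw [gibbsExp, ge_iff_le, le_div_iff₀ hZpos]
  -- The per-vertex union bound plus the Peierls estimate.
  have hμ : ∀ p : V, ∑ τ : V → Bool, (if Internal G τ p then (1:ℝ) else 0) * w τ ≤
      (∑ b ∈ Finset.Icc 1 G.edgeFinset.card,
        (mu G p b : ℝ) * Real.exp (-2 * β * Jmin * (b : ℝ))) * partitionZ G J β := by
    intro p
    set 𝔅 : Finset (Finset (Sym2 V)) :=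
      Finset.univ.filter (fun B => B.Nonempty ∧ InternalTo G p ↑B) with h𝔅
    -- union bound over borders
    have step1 : ∀ τ : V → Bool, (if Internal G τ p then (1:ℝ) else 0) ≤
        ∑ B ∈ 𝔅, (if (↑B : Set (Sym2 V)) ⊆ disagreeSet G (toSpin τ) then (1:ℝ) else 0) := by
      intro τ
      by_cases hInt : Internal G τ p
      · obtain ⟨B₀, hD, hne₀, hint⟩ := id hInt
        have hmem : B₀ ∈ 𝔅 := by
          rw [h𝔅, Finset.mem_filter]
          exact ⟨Finset.mem_univ _, hne₀, hint⟩
        rw [if_pos hInt]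
        have hsingle := Finset.single_le_sum
          (f := fun B : Finset (Sym2 V) =>
            (if (↑B : Set (Sym2 V)) ⊆ disagreeSet G (toSpin τ) then (1:ℝ) else 0))
          (fun B _ => by positivity) hmem
        beta_reduce at hsingle
        rwa [if_pos hD] at hsingle
      · rw [if_neg hInt]
        positivity
    have step2 : ∑ τ : V → Bool, (if Internal G τ p then (1:ℝ) else 0) * w τ ≤
        ∑ B ∈ 𝔅, ∑ τ ∈ Finset.univ.filter
          (fun τ : V → Bool => (↑B : Set (Sym2 V)) ⊆ disagreeSet G (toSpin τ)), w τ := by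
      calc ∑ τ : V → Bool, (if Internal G τ p then (1:ℝ) else 0) * w τ
          ≤ ∑ τ : V → Bool, (∑ B ∈ 𝔅, (if (↑B : Set (Sym2 V)) ⊆ disagreeSet G (toSpin τ)
              then (1:ℝ) else 0)) * w τ :=
            Finset.sum_le_sum (fun τ _ => mul_le_mul_of_nonneg_right (step1 τ) (hwpos τ).le)
        _ = ∑ τ : V → Bool, ∑ B ∈ 𝔅, (if (↑B : Set (Sym2 V)) ⊆ disagreeSet G (toSpin τ)
              then (1:ℝ) else 0) * w τ := by
            exact Finset.sum_congr rfl (fun τ _ => Finset.sum_mul _ _ _)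
        _ = ∑ B ∈ 𝔅, ∑ τ : V → Bool, (if (↑B : Set (Sym2 V)) ⊆ disagreeSet G (toSpin τ)
              then (1:ℝ) else 0) * w τ := Finset.sum_comm
        _ = ∑ B ∈ 𝔅, ∑ τ ∈ Finset.univ.filter
              (fun τ : V → Bool => (↑B : Set (Sym2 V)) ⊆ disagreeSet G (toSpin τ)), w τ := by
            refine Finset.sum_congr rfl (fun B _ => ?_)
            rw [Finset.sum_filter]
            exact Finset.sum_congr rfl (fun τ _ => by rw [ite_mul, one_mul, zero_mul])
    have step3 : ∑ B ∈ 𝔅, ∑ τ ∈ Finset.univ.filter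
          (fun τ : V → Bool => (↑B : Set (Sym2 V)) ⊆ disagreeSet G (toSpin τ)), w τ ≤
        ∑ B ∈ 𝔅, Real.exp (-2 * β * Jmin * (B.card : ℝ)) * partitionZ G J β := by
      refine Finset.sum_le_sum (fun B hB => ?_)
      rw [h𝔅, Finset.mem_filter] at hB
      obtain ⟨_, _, P₁, P₂, hBW, _, _⟩ := hB
      exact peierls_sum G J Jmin β hβ hJ hBW
    have step4 : ∑ B ∈ 𝔅, Real.exp (-2 * β * Jmin * (B.card : ℝ)) ≤
        ∑ b ∈ Finset.Icc 1 G.edgeFinset.card,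
          (mu G p b : ℝ) * Real.exp (-2 * β * Jmin * (b : ℝ)) := by
      have hmap : ∀ B ∈ 𝔅, B.card ∈ Finset.Icc 1 G.edgeFinset.card := by
        intro B hB
        rw [h𝔅, Finset.mem_filter] at hB
        obtain ⟨_, hne₀, P₁, P₂, hBW, _, _⟩ := hB
        rw [Finset.mem_Icc]
        constructor
        · exact Finset.card_pos.mpr hne₀
        · apply Finset.card_le_card
          intro e he
          have : (e : Sym2 V) ∈ (↑B : Set (Sym2 V)) := he
          rw [hBW.eq_edges] at this
          exact SimpleGraph.mem_edgeFinset.mpr this.1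
      rw [← Finset.sum_fiberwise_of_maps_to hmap
        (fun B => Real.exp (-2 * β * Jmin * (B.card : ℝ)))]
      refine Finset.sum_le_sum (fun b _ => ?_)
      have heq : ∑ B ∈ 𝔅.filter (fun B => B.card = b),
          Real.exp (-2 * β * Jmin * (B.card : ℝ))
          = ((𝔅.filter (fun B => B.card = b)).card : ℝ)
            * Real.exp (-2 * β * Jmin * (b : ℝ)) := by
        rw [Finset.sum_congr rfl (fun B hB => by
          rw [(Finset.mem_filter.mp hB).2]), Finset.sum_const, nsmul_eq_mul]
      rw [heq]
      refine mul_le_mul_of_nonneg_right ?_ (Real.exp_pos _).le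
      have hsub : (↑(𝔅.filter (fun B => B.card = b)) : Set (Finset (Sym2 V))) ⊆
          {B : Finset (Sym2 V) | B.card = b ∧ InternalTo G p ↑B} := by
        intro B hB
        simp only [Finset.coe_filter, Set.mem_setOf_eq, h𝔅, Finset.mem_filter] at hB
        exact ⟨hB.2, hB.1.2.2⟩
      have : (𝔅.filter (fun B => B.card = b)).card ≤ mu G p b := by
        rw [← Set.ncard_coe_finset]
        exact Set.ncard_le_ncard hsub (Set.toFinite _)
      exact_mod_cast this
    calc ∑ τ : V → Bool, (if Internal G τ p then (1:ℝ) else 0) * w τ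
        ≤ ∑ B ∈ 𝔅, Real.exp (-2 * β * Jmin * (B.card : ℝ)) * partitionZ G J β :=
          step2.trans step3
      _ = (∑ B ∈ 𝔅, Real.exp (-2 * β * Jmin * (B.card : ℝ))) * partitionZ G J β :=
          (Finset.sum_mul _ _ _).symm
      _ ≤ _ := mul_le_mul_of_nonneg_right step4 hZpos.le
  -- summing the union bound over p
  have hmain : ∑ τ : V → Bool, ({p | Internal G τ p}.ncard : ℝ) * w τ
      ≤ K * partitionZ G J β := by
    calc ∑ τ : V → Bool, ({p | Internal G τ p}.ncard : ℝ) * w τ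
        = ∑ τ : V → Bool, ∑ p : V, (if Internal G τ p then (1:ℝ) else 0) * w τ := by
          refine Finset.sum_congr rfl (fun τ _ => ?_)
          rw [ncard_internal_eq, Finset.sum_mul]
      _ = ∑ p : V, ∑ τ : V → Bool, (if Internal G τ p then (1:ℝ) else 0) * w τ :=
          Finset.sum_comm
      _ ≤ ∑ p : V, (∑ b ∈ Finset.Icc 1 G.edgeFinset.card,
            (mu G p b : ℝ) * Real.exp (-2 * β * Jmin * (b : ℝ))) * partitionZ G J β :=
          Finset.sum_le_sum (fun p _ => hμ p)
      _ = K * partitionZ G J β := by rw [hK, Finset.sum_mul]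
  -- the pointwise magnetization bound
  have hpoint : ∀ τ : V → Bool,
      (1 - 4 / (Fintype.card V : ℝ) * ({p | Internal G τ p}.ncard : ℝ)) * w τ
        ≤ |magn (toSpin τ)| * w τ := by
    intro τ
    refine mul_le_mul_of_nonneg_right ?_ (hwpos τ).le
    have hic := internal_count G hG τ
    have hdiv : 1 - |magn (toSpin τ)| ≤
        4 * ({p | Internal G τ p}.ncard : ℝ) / (Fintype.card V : ℝ) := by
      rw [le_div_iff₀ hnpos]
      nlinarith [hic]
    have heq : 4 / (Fintype.card V : ℝ) * ({p | Internal G τ p}.ncard : ℝ)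
        = 4 * ({p | Internal G τ p}.ncard : ℝ) / (Fintype.card V : ℝ) := by ring
    linarith [hdiv, heq]
  -- put everything together
  have hfinal : ∑ τ : V → Bool,
      (1 - 4 / (Fintype.card V : ℝ) * ({p | Internal G τ p}.ncard : ℝ)) * w τ
      ≤ ∑ τ : V → Bool, |magn (toSpin τ)| * w τ :=
    Finset.sum_le_sum (fun τ _ => hpoint τ)
  have hexpand : ∑ τ : V → Bool,
      (1 - 4 / (Fintype.card V : ℝ) * ({p | Internal G τ p}.ncard : ℝ)) * w τ
      = partitionZ G J β - 4 / (Fintype.card V : ℝ)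
          * ∑ τ : V → Bool, ({p | Internal G τ p}.ncard : ℝ) * w τ := by
    rw [hZ, Finset.mul_sum, ← Finset.sum_sub_distrib]
    refine Finset.sum_congr rfl (fun τ _ => ?_)
    ring
  have h4n : 0 ≤ 4 / (Fintype.card V : ℝ) := by positivity
  have : (1 - 4 / (Fintype.card V : ℝ) * K) * partitionZ G J β
      ≤ ∑ τ : V → Bool, |magn (toSpin τ)| * w τ := by
    have h1 : 4 / (Fintype.card V : ℝ)
        * ∑ τ : V → Bool, ({p | Internal G τ p}.ncard : ℝ) * w τ
        ≤ 4 / (Fintype.card V : ℝ) * (K * partitionZ G J β) :=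
      mul_le_mul_of_nonneg_left hmain h4n
    have h2 := hexpand ▸ hfinal
    nlinarith [h1, h2]
  exact this


end PG
end

section
/- (Finite-volume form of the generalized Peierls–Griffiths theorem.) Let A ≥ 1, J_min > 0 and β > 0 satisfy A · e^{−2 β J_min} ≤ 1/9. Then for every finite connected simple graph G = (V,E) with couplings J(e) ≥ J_min such that μ^p(b) ≤ A^b for all p ∈ V and all b ≥ 1, the Gibbs expectation of |M| at inverse temperature β satisfies E_β[ |M| ] ≥ 1/2. In particular the lower bound is uniform in the size of the graph: if the number of borders of length b internal to any point grows at most exponentially in b, spontaneous magnetization is achieved at low enough temperature. -/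
open scoped BigOperators Classical

namespace PG

variable {V : Type*}

-- basic spin lemmas
section Basic
variable {V : Type*}

lemma disagrees_mk (τ : V → Bool) (i j : V) :
    Disagrees (toSpin τ) s(i, j) ↔ τ i ≠ τ j := by
  show (toSpin τ i ≠ toSpin τ j) ↔ _
  unfold toSpin
  cases hi : τ i <;> cases hj : τ j <;> simp

lemma spinProd_mk (σ : V → ℤ) (i j : V) : spinProd σ s(i, j) = σ i * σ j := rfl

lemma spinProd_agree (τ : V → Bool) (i j : V) (h : τ i = τ j) :
    spinProd (toSpin τ) s(i, j) = 1 := by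
  rw [spinProd_mk]; unfold toSpin; cases hi : τ i <;> cases hj : τ j <;> simp_all

lemma spinProd_disagree (τ : V → Bool) (i j : V) (h : τ i ≠ τ j) :
    spinProd (toSpin τ) s(i, j) = -1 := by
  rw [spinProd_mk]; unfold toSpin; cases hi : τ i <;> cases hj : τ j <;> simp_all

end Basic
section Flip
variable {V : Type*} [Fintype V] [DecidableEq V]

/-- The spin-flip on a set. -/
noncomputable def flipOn (P : Set V) (τ : V → Bool) : V → Bool :=
  fun v => if v ∈ P then !(τ v) else τ v

lemma flipOn_involutive (P : Set V) : Function.Involutive (flipOn (V := V) P) := by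
  intro τ; funext v; unfold flipOn; by_cases h : v ∈ P <;> simp [h]

lemma border_subset_edgeSet {G : SimpleGraph V} {B : Set (Sym2 V)} {P₁ P₂ : Set V}
    (h : IsBorderWith G B P₁ P₂) : B ⊆ G.edgeSet := by
  rw [h.eq_edges]; intro e he; exact he.1

lemma mem_side_iff {G : SimpleGraph V} {B : Set (Sym2 V)} {P₁ P₂ : Set V}
    (h : IsBorderWith G B P₁ P₂) (v : V) : v ∈ P₂ ↔ v ∉ P₁ := by
  constructor
  · intro h2 h1; exact (h.disj.ne_of_mem h1 h2) rfl
  · intro h1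
    have := h.cover.ge (Set.mem_univ v)
    rcases this with h' | h'
    · exact absurd h' h1
    · exact h'

lemma crossing_mem_border {G : SimpleGraph V} {B : Set (Sym2 V)} {P₁ P₂ : Set V}
    (h : IsBorderWith G B P₁ P₂) {i j : V} (he : s(i,j) ∈ G.edgeSet)
    (hi : i ∈ P₁) (hj : j ∈ P₂) : s(i,j) ∈ B := by
  rw [h.eq_edges]; exact ⟨he, i, hi, j, hj, rfl⟩

/-- An edge of `G` not in the border has both ends on the same side. -/
lemma not_crossing {G : SimpleGraph V} {B : Set (Sym2 V)} {P₁ P₂ : Set V}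
    (h : IsBorderWith G B P₁ P₂) {i j : V} (he : s(i,j) ∈ G.edgeSet)
    (hB : s(i,j) ∉ B) : (i ∈ P₁ ↔ j ∈ P₁) := by
  constructor
  · intro hi
    by_contra hj
    exact hB (crossing_mem_border h he hi ((mem_side_iff h j).mpr hj))
  · intro hj
    by_contra hi
    exact hB (by rw [Sym2.eq_swap] at he ⊢; exact crossing_mem_border h he hj ((mem_side_iff h i).mpr hi))

lemma toSpin_flipOn (P : Set V) (τ : V → Bool) (v : V) :
    toSpin (flipOn P τ) v = if v ∈ P then -(toSpin τ v) else toSpin τ v := by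
  unfold toSpin flipOn
  by_cases h : v ∈ P <;> cases hv : τ v <;> simp [h, hv]

lemma hamiltonian_flip {G : SimpleGraph V} [DecidableRel G.Adj] (J : Sym2 V → ℝ)
    {B : Finset (Sym2 V)} {P₁ P₂ : Set V} (h : IsBorderWith G ↑B P₁ P₂)
    (τ : V → Bool) (hsub : (↑B : Set (Sym2 V)) ⊆ disagreeSet G (toSpin τ)) :
    hamiltonian G J (toSpin (flipOn P₁ τ)) =
      hamiltonian G J (toSpin τ) - 2 * ∑ e ∈ B, J e := by
  classical
  have hBE : B ⊆ G.edgeFinset := by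
    intro e he
    exact SimpleGraph.mem_edgeFinset.mpr (border_subset_edgeSet h he)
  unfold hamiltonian
  rw [← Finset.sum_sdiff hBE, ← Finset.sum_sdiff hBE]
  have h1 : ∀ e ∈ G.edgeFinset \ B, J e * (spinProd (toSpin (flipOn P₁ τ)) e : ℝ)
      = J e * (spinProd (toSpin τ) e : ℝ) := by
    intro e he
    rcases Finset.mem_sdiff.mp he with ⟨heE, heB⟩
    induction e using Sym2.ind with
    | _ i j =>
      have hcr := not_crossing h (SimpleGraph.mem_edgeFinset.mp heE) (by exact_mod_cast heB)
      have : spinProd (toSpin (flipOn P₁ τ)) s(i,j) = spinProd (toSpin τ) s(i,j) := by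
        rw [spinProd_mk, spinProd_mk, toSpin_flipOn, toSpin_flipOn]
        by_cases hi : i ∈ P₁
        · rw [if_pos hi, if_pos (hcr.mp hi)]; ring
        · rw [if_neg hi, if_neg (fun hj => hi (hcr.mpr hj))]
      rw [this]
  have h2 : ∀ e ∈ B, J e * (spinProd (toSpin (flipOn P₁ τ)) e : ℝ)
      = J e * (spinProd (toSpin τ) e : ℝ) + 2 * J e := by
    intro e he
    have heB : e ∈ (↑B : Set (Sym2 V)) := he
    rw [h.eq_edges] at heB
    obtain ⟨heE, i, hi, j, hj, rfl⟩ := heB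
    have hdis : Disagrees (toSpin τ) s(i,j) := (hsub he).2
    have hne : τ i ≠ τ j := (disagrees_mk τ i j).mp hdis
    have hs1 : spinProd (toSpin τ) s(i,j) = -1 := spinProd_disagree τ i j hne
    have hs2 : spinProd (toSpin (flipOn P₁ τ)) s(i,j) = 1 := by
      apply spinProd_agree
      unfold flipOn
      rw [if_pos hi, if_neg ((mem_side_iff h j).mp hj)]
      cases hti : τ i <;> cases htj : τ j <;> simp_all
    rw [hs1, hs2]; push_cast; ring
  rw [Finset.sum_congr rfl h1, Finset.sum_congr rfl h2, Finset.sum_add_distrib]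
  rw [← Finset.mul_sum]
  ring

end Flip
section Peierls
variable {V : Type*} [Fintype V] [DecidableEq V]

lemma partitionZ_pos (G : SimpleGraph V) [Fintype G.edgeSet] (J : Sym2 V → ℝ) (β : ℝ) :
    0 < partitionZ G J β := by
  unfold partitionZ
  apply Finset.sum_pos (fun τ _ => Real.exp_pos _)
  exact ⟨fun _ => true, Finset.mem_univ _⟩

/-- Peierls estimate: the weighted sum over configurations whose disagreement set contains
a fixed border `B` is at most `exp(-2 β Jmin |B|) * Z`. -/
lemma peierls_bound (G : SimpleGraph V) [DecidableRel G.Adj] (J : Sym2 V → ℝ)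
    (β Jmin : ℝ) (hβ : 0 < β) (hJ : ∀ e ∈ G.edgeFinset, Jmin ≤ J e) (hJmin : 0 < Jmin)
    {B : Finset (Sym2 V)} (hB : IsBorder G ↑B) :
    ∑ τ ∈ Finset.univ.filter
        (fun τ : V → Bool => (↑B : Set (Sym2 V)) ⊆ disagreeSet G (toSpin τ)),
        Real.exp (-β * hamiltonian G J (toSpin τ))
      ≤ Real.exp (-(2 * β * Jmin) * B.card) * partitionZ G J β := by
  classical
  obtain ⟨P₁, P₂, h⟩ := hB
  have key : ∀ τ ∈ Finset.univ.filter
      (fun τ : V → Bool => (↑B : Set (Sym2 V)) ⊆ disagreeSet G (toSpin τ)),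
      Real.exp (-β * hamiltonian G J (toSpin τ))
        ≤ Real.exp (-(2 * β * Jmin) * B.card) *
            Real.exp (-β * hamiltonian G J (toSpin (flipOn P₁ τ))) := by
    intro τ hτ
    have hsub := (Finset.mem_filter.mp hτ).2
    have hham := hamiltonian_flip J h τ hsub
    rw [← Real.exp_add]
    apply Real.exp_le_exp.mpr
    rw [hham]
    have hsum : (Jmin * B.card : ℝ) ≤ ∑ e ∈ B, J e := by
      calc (Jmin * B.card : ℝ) = ∑ _e ∈ B, Jmin := by
            rw [Finset.sum_const, nsmul_eq_mul]; ring
        _ ≤ ∑ e ∈ B, J e := by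
            apply Finset.sum_le_sum
            intro e he
            exact hJ e (SimpleGraph.mem_edgeFinset.mpr (border_subset_edgeSet h he))
    nlinarith [hβ.le, hsum]
  calc ∑ τ ∈ _, Real.exp (-β * hamiltonian G J (toSpin τ))
      ≤ ∑ τ ∈ Finset.univ.filter
          (fun τ : V → Bool => (↑B : Set (Sym2 V)) ⊆ disagreeSet G (toSpin τ)),
          Real.exp (-(2 * β * Jmin) * B.card) *
            Real.exp (-β * hamiltonian G J (toSpin (flipOn P₁ τ))) :=
        Finset.sum_le_sum key
    _ = Real.exp (-(2 * β * Jmin) * B.card) * ∑ τ ∈ Finset.univ.filter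
          (fun τ : V → Bool => (↑B : Set (Sym2 V)) ⊆ disagreeSet G (toSpin τ)),
          Real.exp (-β * hamiltonian G J (toSpin (flipOn P₁ τ))) := by
        rw [Finset.mul_sum]
    _ ≤ Real.exp (-(2 * β * Jmin) * B.card) * partitionZ G J β := by
        apply mul_le_mul_of_nonneg_left _ (Real.exp_nonneg _)
        unfold partitionZ
        have himg : ∑ τ ∈ Finset.univ.filter
            (fun τ : V → Bool => (↑B : Set (Sym2 V)) ⊆ disagreeSet G (toSpin τ)),
            Real.exp (-β * hamiltonian G J (toSpin (flipOn P₁ τ)))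
            = ∑ τ ∈ (Finset.univ.filter
                (fun τ : V → Bool => (↑B : Set (Sym2 V)) ⊆ disagreeSet G (toSpin τ))).image
                (flipOn P₁),
              Real.exp (-β * hamiltonian G J (toSpin τ)) := by
          rw [Finset.sum_image (fun τ _ τ' _ hh => (flipOn_involutive P₁).injective hh)]
        rw [himg]
        apply Finset.sum_le_sum_of_subset_of_nonneg (Finset.subset_univ _)
        intro τ _ _
        exact (Real.exp_pos _).le

end Peierls
section Cut
variable {V : Type*} [Fintype V] [DecidableEq V]

lemma induce_le_induce {H G : SimpleGraph V} (hHG : H ≤ G) (s : Set V) :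
    H.induce s ≤ G.induce s := by intro a b hab; exact hHG hab

lemma reach_mono_set (G : SimpleGraph V) {s t : Set V} (hst : s ⊆ t) {a b : V}
    (ha : a ∈ s) (hb : b ∈ s)
    (h : (G.induce s).Reachable ⟨a, ha⟩ ⟨b, hb⟩) :
    (G.induce t).Reachable ⟨a, hst ha⟩ ⟨b, hst hb⟩ :=
  h.map (G.induceHomOfLE hst).toHom

/-- The set of vertices reachable in a subgraph `H ≤ G` induces a connected subgraph of `G`. -/
lemma reachableSet_induce_connected {H G : SimpleGraph V} (hHG : H ≤ G) (u : V) :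
    (G.induce {v | H.Reachable u v}).Connected := by
  apply G.induce_connected_of_patches u (by exact SimpleGraph.Reachable.refl u)
  intro v hv
  obtain ⟨p⟩ := hv
  refine ⟨{x | x ∈ p.support}, ?_, p.start_mem_support, p.end_mem_support, ?_⟩
  · intro x hx
    exact ⟨p.takeUntil x hx⟩
  · have hc := (SimpleGraph.Walk.connected_induce_support p)
    have := hc.preconnected ⟨u, p.start_mem_support⟩ ⟨v, p.end_mem_support⟩
    exact this.mono (induce_le_induce hHG _)

/-- Along a walk from inside `C` to outside `C` there is a crossing edge. -/
lemma exists_crossing_edge {G : SimpleGraph V} {C : Set V} :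
    ∀ {u y : V} (_p : G.Walk u y), u ∈ C → y ∉ C →
      ∃ a b, a ∈ C ∧ b ∉ C ∧ G.Adj a b := by
  intro u y p
  induction p with
  | nil => exact fun hu hy => absurd hu hy
  | @cons a b c hadj q ih =>
    intro hu hy
    by_cases hb : b ∈ C
    · exact ih hb hy
    · exact ⟨a, b, hu, hb, hadj⟩

end Cut
section GoodCut
variable {V : Type*} [Fintype V] [DecidableEq V]

/-- The subgraph of `G` of edges between equal spins. -/
def sameSpin (G : SimpleGraph V) (τ : V → Bool) : SimpleGraph V where
  Adj a b := G.Adj a b ∧ τ a = τ b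
  symm := ⟨fun a b h => ⟨h.1.symm, h.2.symm⟩⟩
  loopless := ⟨fun a h => G.irrefl h.1⟩

lemma sameSpin_le (G : SimpleGraph V) (τ : V → Bool) : sameSpin G τ ≤ G := by
  intro a b h; exact h.1

lemma sameSpin_reachable_spin {G : SimpleGraph V} {τ : V → Bool} {u v : V}
    (h : (sameSpin G τ).Reachable u v) : τ u = τ v := by
  obtain ⟨p⟩ := h
  induction p with
  | nil => rfl
  | cons h q ih => exact h.2.trans ih

/-- The restriction of `G` to a set, as a graph on `V`. -/
def restrict (G : SimpleGraph V) (s : Set V) : SimpleGraph V where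
  Adj a b := G.Adj a b ∧ a ∈ s ∧ b ∈ s
  symm := ⟨fun a b h => ⟨h.1.symm, h.2.2, h.2.1⟩⟩
  loopless := ⟨fun a h => G.irrefl h.1⟩

lemma restrict_le (G : SimpleGraph V) (s : Set V) : restrict G s ≤ G := by
  intro a b h; exact h.1

lemma restrict_reachable_mem {G : SimpleGraph V} {s : Set V} {y v : V}
    (h : (restrict G s).Reachable y v) (hy : y ∈ s) : v ∈ s := by
  obtain ⟨p⟩ := h
  induction p with
  | nil => exact hy
  | cons h q ih => exact ih h.2.2

lemma cut_extension_connected (G : SimpleGraph V) (hG : G.Connected) {C K : Set V}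
    (hCconn : (G.induce C).Connected) (hCne : C.Nonempty) (hCK : C ⊆ Kᶜ)
    (hKcl : ∀ v, v ∉ C → ∀ w ∈ K, G.Adj v w → v ∈ K) :
    (G.induce Kᶜ).Connected := by
  obtain ⟨u₀, hu₀⟩ := hCne
  have hu₀' : u₀ ∈ Kᶜ := hCK hu₀
  have main : ∀ (v c : V) (_p : G.Walk v c), c ∈ C → ∀ (hv : v ∈ Kᶜ),
      (G.induce Kᶜ).Reachable ⟨v, hv⟩ ⟨u₀, hu₀'⟩ := by
    intro v c p
    induction p with
    | nil =>
      intro hc hv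
      exact reach_mono_set G hCK hc hu₀ (hCconn.preconnected ⟨_, hc⟩ ⟨u₀, hu₀⟩)
    | @cons a b c hadj q ih =>
      intro hc hv
      by_cases haC : a ∈ C
      · exact reach_mono_set G hCK haC hu₀ (hCconn.preconnected ⟨a, haC⟩ ⟨u₀, hu₀⟩)
      · have hbK : b ∈ Kᶜ := fun hbK => hv (hKcl a haC b hbK hadj)
        have hadj' : (G.induce Kᶜ).Adj ⟨a, hv⟩ ⟨b, hbK⟩ := hadj
        exact (hadj'.reachable).trans (ih hc hbK)
  rw [SimpleGraph.connected_iff]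
  refine ⟨?_, ⟨⟨u₀, hu₀'⟩⟩⟩
  intro x y
  obtain ⟨p⟩ := hG.preconnected x u₀
  obtain ⟨q⟩ := hG.preconnected y u₀
  exact (main x u₀ p hu₀ x.2).trans (main y u₀ q hu₀ y.2).symm

/-- Existence of a "good cut": a set whose two sides are connected and all of whose
crossing edges are disagreement edges. -/
lemma exists_good_cut (G : SimpleGraph V) (hG : G.Connected) (τ : V → Bool)
    {i j : V} (hij : G.Adj i j) (hτ : τ i ≠ τ j) :
    ∃ C : Set V, C.Nonempty ∧ Cᶜ.Nonempty ∧ (G.induce C).Connected ∧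
      (G.induce Cᶜ).Connected ∧ (∀ a ∈ C, ∀ b, b ∉ C → G.Adj a b → τ a ≠ τ b) := by
  classical
  set F : Set (Set V) := {C | C.Nonempty ∧ Cᶜ.Nonempty ∧ (G.induce C).Connected ∧
    ∀ a ∈ C, ∀ b, b ∉ C → G.Adj a b → τ a ≠ τ b} with hF
  have hF0 : {v | (sameSpin G τ).Reachable i v} ∈ F := by
    refine ⟨⟨i, SimpleGraph.Reachable.refl i⟩, ⟨j, ?_⟩,
      reachableSet_induce_connected (sameSpin_le G τ) i, ?_⟩
    · intro hj; exact hτ (sameSpin_reachable_spin hj)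
    · intro a ha b hb hadj heq
      exact hb (ha.trans (SimpleGraph.Adj.reachable (show (sameSpin G τ).Adj a b from ⟨hadj, heq⟩)))
  obtain ⟨C, hC, hmax⟩ := Set.Finite.exists_maximalFor (fun C => C.ncard) F
    (Set.toFinite F) ⟨_, hF0⟩
  obtain ⟨hCne, hCcne, hCconn, hCbd⟩ := hC
  obtain ⟨y, hy⟩ := hCcne
  set K : Set V := {v | (restrict G Cᶜ).Reachable y v} with hKdef
  have hyK : y ∈ K := SimpleGraph.Reachable.refl y
  have hKsub : K ⊆ Cᶜ := fun v hv => restrict_reachable_mem hv hy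
  have hKcl : ∀ v, v ∉ C → ∀ w ∈ K, G.Adj v w → v ∈ K := by
    intro v hv w hw hadj
    exact hw.trans (SimpleGraph.Adj.reachable
      (show (restrict G Cᶜ).Adj w v from ⟨hadj.symm, hKsub hw, hv⟩))
  have hKeq : K = Cᶜ := by
    by_contra hne
    obtain ⟨x, hx, hxK⟩ : ∃ x, x ∈ Cᶜ ∧ x ∉ K := by
      rcases Set.exists_of_ssubset (hKsub.ssubset_of_ne hne) with ⟨x, hx1, hx2⟩
      exact ⟨x, hx1, hx2⟩
    have hCsub : C ⊆ Kᶜ := fun c hc hcK => (hKsub hcK) hc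
    have hC'mem : Kᶜ ∈ F := by
      refine ⟨hCne.mono hCsub, ⟨y, by simp [hyK]⟩,
        cut_extension_connected G hG hCconn hCne hCsub hKcl, ?_⟩
      intro a ha b hb hadj heq
      by_cases haC : a ∈ C
      · have hbC : b ∉ C := fun hbC => (hKsub (not_not.mp hb)) hbC
        exact hCbd a haC b hbC hadj heq
      · exact ha (hKcl a haC b (not_not.mp hb) hadj)
    have hssub : C ⊂ Kᶜ := ⟨hCsub, fun hsup => hx (hsup (Set.mem_compl hxK))⟩
    have := hmax hC'mem (le_of_lt (Set.ncard_lt_ncard hssub (Set.toFinite _)))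
    exact absurd this (not_le_of_gt (Set.ncard_lt_ncard hssub (Set.toFinite _)))
  refine ⟨C, hCne, ⟨y, hy⟩, hCconn, ?_, hCbd⟩
  rw [← hKeq]
  exact reachableSet_induce_connected (restrict_le G Cᶜ) y

end GoodCut
section Counting
variable {V : Type*} [Fintype V] [DecidableEq V]

/-- The disagreement set, as a finset. -/
noncomputable def Dfin (G : SimpleGraph V) (τ : V → Bool) : Finset (Sym2 V) :=
  Finset.univ.filter (fun e => e ∈ G.edgeSet ∧ Disagrees (toSpin τ) e)

lemma coe_Dfin (G : SimpleGraph V) (τ : V → Bool) :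
    (↑(Dfin G τ) : Set (Sym2 V)) = disagreeSet G (toSpin τ) := by
  ext e; simp [Dfin, disagreeSet]

noncomputable def Nup (τ : V → Bool) : ℕ :=
  (Finset.univ.filter (fun v : V => τ v = true)).card

noncomputable def Ndown (τ : V → Bool) : ℕ :=
  (Finset.univ.filter (fun v : V => τ v = false)).card

/-- number of borders internal to `p` contained in the disagreement set -/
noncomputable def borderCount (G : SimpleGraph V) (τ : V → Bool) (p : V) : ℕ :=
  (Finset.univ.filter (fun B : Finset (Sym2 V) =>
     InternalTo G p ↑B ∧ (↑B : Set (Sym2 V)) ⊆ disagreeSet G (toSpin τ))).card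

lemma tau_const_of_Dfin_empty {G : SimpleGraph V} (hG : G.Connected) {τ : V → Bool}
    (hD : Dfin G τ = ∅) : ∀ a b, τ a = τ b := by
  have hadj : ∀ a b, G.Adj a b → τ a = τ b := by
    intro a b hab
    by_contra hne
    have : s(a,b) ∈ Dfin G τ := by
      simp only [Dfin, Finset.mem_filter, Finset.mem_univ, true_and]
      exact ⟨(SimpleGraph.mem_edgeSet G).mpr hab, (disagrees_mk τ a b).mpr hne⟩
    rw [hD] at this
    exact absurd this (Finset.notMem_empty _)
  intro a b
  obtain ⟨p⟩ := hG.preconnected a b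
  induction p with
  | nil => rfl
  | cons h q ih => exact (hadj _ _ h).trans ih

lemma min_eq_zero_of_const {τ : V → Bool} (hconst : ∀ a b, τ a = τ b) [Nonempty V] :
    min (Nup τ) (Ndown τ) = 0 := by
  obtain ⟨x⟩ := ‹Nonempty V›
  cases hx : τ x with
  | false =>
    have : Nup τ = 0 := by
      rw [Nup, Finset.card_eq_zero, Finset.filter_eq_empty_iff]
      intro v _
      rw [(hconst v x), hx]; simp
    omega
  | true =>
    have : Ndown τ = 0 := by
      rw [Ndown, Finset.card_eq_zero, Finset.filter_eq_empty_iff]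
      intro v _
      rw [(hconst v x), hx]; simp
    omega

lemma isBorderWith_symm {G : SimpleGraph V} {B : Set (Sym2 V)} {P₁ P₂ : Set V}
    (h : IsBorderWith G B P₁ P₂) : IsBorderWith G B P₂ P₁ := by
  refine ⟨h.disj.symm, Set.union_comm P₂ P₁ ▸ h.cover, h.ne₂, h.ne₁, h.conn₂, h.conn₁, ?_⟩
  rw [h.eq_edges]
  ext e
  simp only [Set.mem_setOf_eq]
  constructor
  · rintro ⟨he, i, hi, j, hj, rfl⟩
    exact ⟨he, j, hj, i, hi, Sym2.eq_swap⟩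
  · rintro ⟨he, i, hi, j, hj, rfl⟩
    exact ⟨he, j, hj, i, hi, Sym2.eq_swap⟩

end Counting
section BorderCut
variable {V : Type*} [Fintype V] [DecidableEq V] {G : SimpleGraph V} {τ : V → Bool} {C : Set V}

noncomputable def cutBorder (G : SimpleGraph V) (C : Set V) : Finset (Sym2 V) :=
  Finset.univ.filter (fun e => e ∈ G.edgeSet ∧ ∃ a ∈ C, ∃ b ∈ Cᶜ, e = s(a,b))

lemma coe_cutBorder (G : SimpleGraph V) (C : Set V) : (↑(cutBorder G C) : Set (Sym2 V)) =
    {e : Sym2 V | e ∈ G.edgeSet ∧ ∃ i ∈ C, ∃ j ∈ Cᶜ, e = s(i,j)} := by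
  ext e; simp [cutBorder]

lemma cutBorder_isBorderWith (h1 : C.Nonempty) (h2 : Cᶜ.Nonempty)
    (h3 : (G.induce C).Connected) (h4 : (G.induce Cᶜ).Connected) :
    IsBorderWith G ↑(cutBorder G C) C Cᶜ :=
  ⟨disjoint_compl_right, Set.union_compl_self C, h1, h2, h3, h4, coe_cutBorder G C⟩

lemma mem_cutBorder_iff {a b : V} : s(a,b) ∈ cutBorder G C ↔
    G.Adj a b ∧ ((a ∈ C ∧ b ∉ C) ∨ (b ∈ C ∧ a ∉ C)) := by
  simp only [cutBorder, Finset.mem_filter, Finset.mem_univ, true_and,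
    SimpleGraph.mem_edgeSet]
  constructor
  · rintro ⟨hadj, i, hi, j, hj, hij⟩
    rw [Sym2.eq_iff] at hij
    rcases hij with ⟨rfl, rfl⟩ | ⟨rfl, rfl⟩
    · exact ⟨hadj, Or.inl ⟨hi, hj⟩⟩
    · exact ⟨hadj, Or.inr ⟨hi, hj⟩⟩
  · rintro ⟨hadj, ⟨hi, hj⟩ | ⟨hi, hj⟩⟩
    · exact ⟨hadj, a, hi, b, hj, rfl⟩
    · exact ⟨hadj, b, hi, a, hj, Sym2.eq_swap⟩

lemma cutBorder_nonempty (hG : G.Connected) (h1 : C.Nonempty) (h2 : Cᶜ.Nonempty) :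
    (cutBorder G C).Nonempty := by
  obtain ⟨u, hu⟩ := h1
  obtain ⟨y, hy⟩ := h2
  obtain ⟨p⟩ := hG.preconnected u y
  obtain ⟨a, b, ha, hb, hadj⟩ := exists_crossing_edge p hu hy
  exact ⟨s(a,b), mem_cutBorder_iff.mpr ⟨hadj, Or.inl ⟨ha, hb⟩⟩⟩

lemma cutBorder_subset_disagree
    (hbd : ∀ a ∈ C, ∀ b, b ∉ C → G.Adj a b → τ a ≠ τ b) :
    (↑(cutBorder G C) : Set (Sym2 V)) ⊆ disagreeSet G (toSpin τ) := by
  intro e he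
  have he' : e ∈ cutBorder G C := he
  induction e using Sym2.ind with
  | _ a b =>
    rw [mem_cutBorder_iff] at he'
    obtain ⟨hadj, hcr⟩ := he'
    refine ⟨(SimpleGraph.mem_edgeSet G).mpr hadj, (disagrees_mk τ a b).mpr ?_⟩
    rcases hcr with ⟨ha, hb⟩ | ⟨hb, ha⟩
    · exact hbd a ha b hb hadj
    · exact fun h => (hbd b hb a ha hadj.symm) h.symm

lemma Dfin_flip (hbd : ∀ a ∈ C, ∀ b, b ∉ C → G.Adj a b → τ a ≠ τ b) :
    Dfin G (flipOn C τ) = Dfin G τ \ cutBorder G C := by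
  ext e
  induction e using Sym2.ind with
  | _ a b =>
    simp only [Dfin, Finset.mem_filter, Finset.mem_univ, true_and, Finset.mem_sdiff,
      disagrees_mk]
    by_cases hedge : s(a,b) ∈ G.edgeSet
    · have hadj : G.Adj a b := (SimpleGraph.mem_edgeSet G).mp hedge
      by_cases haC : a ∈ C <;> by_cases hbC : b ∈ C
      · have hnot : s(a,b) ∉ cutBorder G C := by
          rw [mem_cutBorder_iff]; tauto
        simp only [flipOn, if_pos haC, if_pos hbC, hedge, hnot, true_and,
          not_false_iff, and_true]
        cases hta : τ a <;> cases htb : τ b <;> simp_all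
      · have hmem : s(a,b) ∈ cutBorder G C := mem_cutBorder_iff.mpr ⟨hadj, Or.inl ⟨haC, hbC⟩⟩
        have hne := hbd a haC b hbC hadj
        simp only [flipOn, if_pos haC, if_neg hbC, hedge, hmem, true_and, not_true,
          and_false, iff_false]
        intro h; apply h; cases hta : τ a <;> cases htb : τ b <;> simp_all
      · have hmem : s(a,b) ∈ cutBorder G C := mem_cutBorder_iff.mpr ⟨hadj, Or.inr ⟨hbC, haC⟩⟩
        have hne : τ b ≠ τ a := hbd b hbC a haC hadj.symm
        simp only [flipOn, if_neg haC, if_pos hbC, hedge, hmem, true_and, not_true,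
          and_false, iff_false]
        intro h; apply h; cases hta : τ a <;> cases htb : τ b <;> simp_all
      · have hnot : s(a,b) ∉ cutBorder G C := by
          rw [mem_cutBorder_iff]; tauto
        simp only [flipOn, if_neg haC, if_neg hbC, hedge, hnot, true_and,
          not_false_iff, and_true]
    · have hnot : s(a,b) ∉ cutBorder G C := by
        rw [mem_cutBorder_iff]
        exact fun h => hedge ((SimpleGraph.mem_edgeSet G).mpr h.1)
      simp [hedge]

lemma cutBorder_subset_Dfin (hbd : ∀ a ∈ C, ∀ b, b ∉ C → G.Adj a b → τ a ≠ τ b) :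
    cutBorder G C ⊆ Dfin G τ := by
  intro e he
  have := cutBorder_subset_disagree hbd (show e ∈ (↑(cutBorder G C) : Set (Sym2 V)) from he)
  simp only [Dfin, Finset.mem_filter, Finset.mem_univ, true_and]
  exact this

end BorderCut
section SpinCount
variable {V : Type*} [Fintype V] [DecidableEq V]

lemma card_filter_split (S : Finset V) (p : V → Prop) [DecidablePred p] :
    (Finset.univ.filter p).card = (S.filter p).card + (Sᶜ.filter p).card := by
  classical
  rw [← Finset.card_union_of_disjoint
    (Finset.disjoint_filter_filter disjoint_compl_right), ← Finset.filter_union,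
    Finset.union_compl]

lemma spin_count_flip (τ : V → Bool) (C : Set V) :
    min (Nup τ) (Ndown τ) ≤
      min (Nup (flipOn C τ)) (Ndown (flipOn C τ)) + min C.ncard Cᶜ.ncard := by
  classical
  set S : Finset V := C.toFinset with hS
  have hmemS : ∀ v, v ∈ S ↔ v ∈ C := fun v => Set.mem_toFinset
  have hmemSc : ∀ v, v ∈ Sᶜ ↔ v ∉ C := by
    intro v; rw [Finset.mem_compl, hmemS]
  set cp := (S.filter (fun v => τ v = true)).card
  set cm := (S.filter (fun v => τ v = false)).card
  set xp := (Sᶜ.filter (fun v => τ v = true)).card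
  set xm := (Sᶜ.filter (fun v => τ v = false)).card
  have e1 : Nup τ = cp + xp := by rw [Nup]; exact card_filter_split S _
  have e2 : Ndown τ = cm + xm := by rw [Ndown]; exact card_filter_split S _
  have e3 : Nup (flipOn C τ) = cm + xp := by
    rw [Nup, card_filter_split S]
    congr 1
    · apply Finset.card_bij (fun a _ => a) <;>
        simp_all [flipOn, hmemS] <;> intros <;> simp_all
    · apply Finset.card_bij (fun a _ => a) <;>
        simp_all [flipOn, hmemSc] <;> intros <;> simp_all
  have e4 : Ndown (flipOn C τ) = cp + xm := by
    rw [Ndown, card_filter_split S]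
    congr 1
    · apply Finset.card_bij (fun a _ => a) <;>
        simp_all [flipOn, hmemS] <;> intros <;> simp_all
    · apply Finset.card_bij (fun a _ => a) <;>
        simp_all [flipOn, hmemSc] <;> intros <;> simp_all
  have e5 : C.ncard = cp + cm := by
    rw [Set.ncard_eq_toFinset_card', ← hS]
    have h := Finset.card_filter_add_card_filter_not
      (s := S) (p := fun v => τ v = true)
    have hcongr : S.filter (fun v => ¬(τ v = true)) = S.filter (fun v => τ v = false) :=
      Finset.filter_congr (fun v _ => by simp)
    rw [hcongr] at h
    omega
  have e6 : Cᶜ.ncard = xp + xm := by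
    have hc : Cᶜ.toFinset = Sᶜ := by rw [hS, Set.toFinset_compl]
    rw [Set.ncard_eq_toFinset_card', hc]
    have h := Finset.card_filter_add_card_filter_not
      (s := Sᶜ) (p := fun v => τ v = true)
    have hcongr : Sᶜ.filter (fun v => ¬(τ v = true)) = Sᶜ.filter (fun v => τ v = false) :=
      Finset.filter_congr (fun v _ => by simp)
    rw [hcongr] at h
    omega
  omega

end SpinCount
section MainCount
variable {V : Type*} [Fintype V] [DecidableEq V]

lemma internal_count_s8 (G : SimpleGraph V) {C : Set V}
    (hIB : IsBorderWith G ↑(cutBorder G C) C Cᶜ) :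
    min C.ncard Cᶜ.ncard ≤
      (Finset.univ.filter (fun p => InternalTo G p ↑(cutBorder G C))).card := by
  rcases le_total C.ncard Cᶜ.ncard with h | h
  · calc min C.ncard Cᶜ.ncard ≤ C.ncard := min_le_left _ _
      _ = C.toFinset.card := Set.ncard_eq_toFinset_card' C
      _ ≤ _ := Finset.card_le_card (fun p hp => Finset.mem_filter.mpr
          ⟨Finset.mem_univ _, C, Cᶜ, hIB, Set.mem_toFinset.mp hp, h⟩)
  · calc min C.ncard Cᶜ.ncard ≤ Cᶜ.ncard := min_le_right _ _
      _ = Cᶜ.toFinset.card := Set.ncard_eq_toFinset_card' Cᶜ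
      _ ≤ _ := Finset.card_le_card (fun p hp => Finset.mem_filter.mpr
          ⟨Finset.mem_univ _, Cᶜ, C, isBorderWith_symm hIB, Set.mem_toFinset.mp hp, h⟩)

lemma main_counting (G : SimpleGraph V) (hG : G.Connected) (τ : V → Bool) :
    min (Nup τ) (Ndown τ) ≤ ∑ p : V, borderCount G τ p := by
  classical
  suffices H : ∀ n, ∀ τ : V → Bool, (Dfin G τ).card = n →
      min (Nup τ) (Ndown τ) ≤ ∑ p : V, borderCount G τ p from H _ τ rfl
  intro n
  induction n using Nat.strong_induction_on with
  | _ n ih =>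
    intro τ hn
    by_cases hD : Dfin G τ = ∅
    · have := hG.nonempty
      rw [min_eq_zero_of_const (tau_const_of_Dfin_empty hG hD)]
      exact Nat.zero_le _
    · obtain ⟨e, he⟩ := Finset.nonempty_iff_ne_empty.mpr hD
      have he' : e ∈ G.edgeSet ∧ Disagrees (toSpin τ) e :=
        (Finset.mem_filter.mp he).2
      clear he
      revert he'
      induction e using Sym2.ind with
      | _ i j =>
      intro he'
      have hadj : G.Adj i j := (SimpleGraph.mem_edgeSet G).mp he'.1
      have hne : τ i ≠ τ j := (disagrees_mk τ i j).mp he'.2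
      obtain ⟨C, hC1, hC2, hc3, hc4, hbd⟩ := exists_good_cut G hG τ hadj hne
      set B₀ := cutBorder G C with hB₀def
      have hIB : IsBorderWith G ↑B₀ C Cᶜ := cutBorder_isBorderWith hC1 hC2 hc3 hc4
      have hB₀ne : B₀.Nonempty := cutBorder_nonempty hG hC1 hC2
      have hB₀D : B₀ ⊆ Dfin G τ := cutBorder_subset_Dfin hbd
      have hflip : Dfin G (flipOn C τ) = Dfin G τ \ B₀ := Dfin_flip hbd
      have hcard' : (Dfin G (flipOn C τ)).card < n := by
        rw [hflip, Finset.card_sdiff_of_subset hB₀D, hn]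
        have h1 : 1 ≤ B₀.card := hB₀ne.card_pos
        have h2 : B₀.card ≤ n := hn ▸ Finset.card_le_card hB₀D
        omega
      have hrec := ih _ hcard' (flipOn C τ) rfl
      have hsubD' : disagreeSet G (toSpin (flipOn C τ)) ⊆ disagreeSet G (toSpin τ) := by
        rw [← coe_Dfin, ← coe_Dfin, hflip]
        exact_mod_cast Finset.coe_subset.mpr Finset.sdiff_subset
      have hpoint : ∀ p : V, borderCount G (flipOn C τ) p +
          (if InternalTo G p ↑B₀ then 1 else 0) ≤ borderCount G τ p := by
        intro p
        by_cases hint : InternalTo G p ↑B₀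
        · rw [if_pos hint]
          have hB₀notD' : ¬ ((↑B₀ : Set (Sym2 V)) ⊆ disagreeSet G (toSpin (flipOn C τ))) := by
            obtain ⟨e₀, he₀⟩ := hB₀ne
            intro hsub
            have h1 : e₀ ∈ Dfin G (flipOn C τ) := by
              have := hsub (show e₀ ∈ (↑B₀ : Set (Sym2 V)) from he₀)
              rw [← coe_Dfin] at this
              exact_mod_cast this
            rw [hflip, Finset.mem_sdiff] at h1
            exact h1.2 he₀
          have hnotmem : B₀ ∉ Finset.univ.filter (fun B : Finset (Sym2 V) =>
              InternalTo G p ↑B ∧ (↑B : Set (Sym2 V)) ⊆ disagreeSet G (toSpin (flipOn C τ))) := by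
            intro hmem
            exact hB₀notD' (Finset.mem_filter.mp hmem).2.2
          have hins : insert B₀ (Finset.univ.filter (fun B : Finset (Sym2 V) =>
              InternalTo G p ↑B ∧ (↑B : Set (Sym2 V)) ⊆ disagreeSet G (toSpin (flipOn C τ)))) ⊆
              Finset.univ.filter (fun B : Finset (Sym2 V) =>
              InternalTo G p ↑B ∧ (↑B : Set (Sym2 V)) ⊆ disagreeSet G (toSpin τ)) := by
            intro B hB
            rcases Finset.mem_insert.mp hB with rfl | hB
            · exact Finset.mem_filter.mpr ⟨Finset.mem_univ _, hint,
                fun e he => cutBorder_subset_disagree hbd (by exact_mod_cast he)⟩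
            · have := Finset.mem_filter.mp hB
              exact Finset.mem_filter.mpr ⟨Finset.mem_univ _, this.2.1, this.2.2.trans hsubD'⟩
          calc borderCount G (flipOn C τ) p + 1
              = (insert B₀ (Finset.univ.filter (fun B : Finset (Sym2 V) =>
                  InternalTo G p ↑B ∧ (↑B : Set (Sym2 V)) ⊆
                    disagreeSet G (toSpin (flipOn C τ))))).card := by
                rw [Finset.card_insert_of_notMem hnotmem]; rfl
            _ ≤ borderCount G τ p := Finset.card_le_card hins
        · rw [if_neg hint, add_zero]
          apply Finset.card_le_card
          intro B hB
          have := Finset.mem_filter.mp hB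
          exact Finset.mem_filter.mpr ⟨Finset.mem_univ _, this.2.1, this.2.2.trans hsubD'⟩
      calc min (Nup τ) (Ndown τ)
          ≤ min (Nup (flipOn C τ)) (Ndown (flipOn C τ)) + min C.ncard Cᶜ.ncard :=
            spin_count_flip τ C
        _ ≤ (∑ p : V, borderCount G (flipOn C τ) p) +
            (Finset.univ.filter (fun p => InternalTo G p ↑B₀)).card :=
            add_le_add hrec (internal_count_s8 G hIB)
        _ = ∑ p : V, (borderCount G (flipOn C τ) p +
            (if InternalTo G p ↑B₀ then 1 else 0)) := by
            rw [Finset.sum_add_distrib, Finset.card_filter]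
        _ ≤ ∑ p : V, borderCount G τ p := Finset.sum_le_sum (fun p _ => hpoint p)

end MainCount
section Assemble
variable {V : Type*} [Fintype V] [DecidableEq V]

lemma mu_eq_card (G : SimpleGraph V) (p : V) (b : ℕ) :
    mu G p b = (Finset.univ.filter
      (fun B : Finset (Sym2 V) => B.card = b ∧ InternalTo G p ↑B)).card := by
  rw [mu, ← Set.ncard_coe_finset]
  congr 1
  ext B
  simp

lemma internal_card_pos {G : SimpleGraph V} (hG : G.Connected) {p : V}
    {B : Finset (Sym2 V)} (h : InternalTo G p ↑B) : 0 < B.card := by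
  obtain ⟨P₁, P₂, hIB, hp, _⟩ := h
  obtain ⟨q, hq⟩ := hIB.ne₂
  obtain ⟨wk⟩ := hG.preconnected p q
  have hqn : q ∉ P₁ := (mem_side_iff hIB q).mp hq
  obtain ⟨a, b, ha, hb, hadj⟩ := exists_crossing_edge wk hp hqn
  have hmem : s(a,b) ∈ (↑B : Set (Sym2 V)) :=
    crossing_mem_border hIB ((SimpleGraph.mem_edgeSet G).mpr hadj) ha
      ((mem_side_iff hIB b).mpr hb)
  exact Finset.card_pos.mpr ⟨s(a,b), hmem⟩

lemma geom_tail_bound (M : ℕ) : ∑ b ∈ Finset.range (M+1),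
    (if b = 0 then (0:ℝ) else (1/9)^b) ≤ 1/8 := by
  rw [Finset.sum_range_succ']
  have hz : (if (0:ℕ) = 0 then (0:ℝ) else (1/9)^(0:ℕ)) = 0 := by norm_num
  have hs : ∀ i : ℕ, (if i + 1 = 0 then (0:ℝ) else (1/9)^(i+1)) = (1/9:ℝ)^(i+1) := by
    intro i; simp
  rw [hz, add_zero, Finset.sum_congr rfl (fun i _ => hs i)]
  have h9 : ((1:ℝ)/9) ≠ 1 := by norm_num
  have hgeom := geom_sum_mul ((1:ℝ)/9) M
  have hpow : (0:ℝ) ≤ ((1:ℝ)/9)^M := by positivity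
  have hsum : ∑ i ∈ Finset.range M, ((1:ℝ)/9)^i ≤ 9/8 := by nlinarith
  calc ∑ i ∈ Finset.range M, ((1:ℝ)/9)^(i+1)
      = (∑ i ∈ Finset.range M, ((1:ℝ)/9)^i) * (1/9) := by
        rw [Finset.sum_mul]
        exact Finset.sum_congr rfl (fun i _ => by rw [pow_succ])
    _ ≤ (9/8) * (1/9) := by
        apply mul_le_mul_of_nonneg_right hsum (by norm_num)
    _ = 1/8 := by norm_num

lemma border_sum_bound {G : SimpleGraph V} (hG : G.Connected) {A β Jmin : ℝ}
    (hA : 1 ≤ A) (hβ : 0 < β) (hJmin : 0 < Jmin)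
    (hx : A * Real.exp (-(2 * β * Jmin)) ≤ 1/9) (p : V)
    (hmu : ∀ b : ℕ, 1 ≤ b → (mu G p b : ℝ) ≤ A ^ b) :
    ∑ B ∈ Finset.univ.filter (fun B : Finset (Sym2 V) => InternalTo G p ↑B),
      Real.exp (-(2 * β * Jmin) * (B.card : ℝ)) ≤ 1/8 := by
  classical
  set M := Fintype.card (Sym2 V) with hM
  have hmap : ∀ B ∈ Finset.univ.filter (fun B : Finset (Sym2 V) => InternalTo G p ↑B),
      B.card ∈ Finset.range (M+1) := by
    intro B _
    rw [Finset.mem_range]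
    exact Nat.lt_succ_of_le (Finset.card_le_univ B)
  rw [← Finset.sum_fiberwise_of_maps_to hmap]
  have hfiber : ∀ b : ℕ, ∑ B ∈ (Finset.univ.filter
      (fun B : Finset (Sym2 V) => InternalTo G p ↑B)).filter (fun B => B.card = b),
      Real.exp (-(2 * β * Jmin) * (B.card : ℝ))
      = (mu G p b : ℝ) * Real.exp (-(2 * β * Jmin) * (b : ℝ)) := by
    intro b
    have h1 : ∀ B ∈ (Finset.univ.filter
        (fun B : Finset (Sym2 V) => InternalTo G p ↑B)).filter (fun B => B.card = b),
        Real.exp (-(2 * β * Jmin) * (B.card : ℝ))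
          = Real.exp (-(2 * β * Jmin) * (b : ℝ)) := by
      intro B hB
      rw [(Finset.mem_filter.mp hB).2]
    rw [Finset.sum_congr rfl h1, Finset.sum_const, nsmul_eq_mul]
    congr 2
    rw [mu_eq_card, Finset.filter_filter]
    apply Finset.card_bij (fun B _ => B)
    · intro B hB
      have := Finset.mem_filter.mp hB
      exact Finset.mem_filter.mpr ⟨Finset.mem_univ _, this.2.2, this.2.1⟩
    · intro B _ B' _ h; exact h
    · intro B hB
      have := Finset.mem_filter.mp hB
      exact ⟨B, Finset.mem_filter.mpr ⟨Finset.mem_univ _, this.2.2, this.2.1⟩, rfl⟩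
  calc ∑ b ∈ Finset.range (M+1), ∑ B ∈ (Finset.univ.filter
        (fun B : Finset (Sym2 V) => InternalTo G p ↑B)).filter (fun B => B.card = b),
        Real.exp (-(2 * β * Jmin) * (B.card : ℝ))
      = ∑ b ∈ Finset.range (M+1), (mu G p b : ℝ) * Real.exp (-(2 * β * Jmin) * (b : ℝ)) :=
        Finset.sum_congr rfl (fun b _ => hfiber b)
    _ ≤ ∑ b ∈ Finset.range (M+1), (if b = 0 then (0:ℝ) else (1/9)^b) := by
        apply Finset.sum_le_sum
        intro b _
        by_cases hb : b = 0
        · subst hb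
          have : mu G p 0 = 0 := by
            rw [mu_eq_card, Finset.card_eq_zero, Finset.filter_eq_empty_iff]
            rintro B _ ⟨hc, hint⟩
            have := internal_card_pos hG hint
            omega
          simp [this]
        · rw [if_neg hb]
          have hb1 : 1 ≤ b := Nat.one_le_iff_ne_zero.mpr hb
          have hexp : Real.exp (-(2 * β * Jmin) * (b : ℝ))
              = (Real.exp (-(2 * β * Jmin)))^b := by
            rw [← Real.exp_nat_mul]
            ring_nf
          rw [hexp]
          have hexppos : (0:ℝ) < Real.exp (-(2 * β * Jmin)) := Real.exp_pos _
          calc (mu G p b : ℝ) * (Real.exp (-(2 * β * Jmin)))^b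
              ≤ A^b * (Real.exp (-(2 * β * Jmin)))^b := by
                apply mul_le_mul_of_nonneg_right (hmu b hb1) (by positivity)
            _ = (A * Real.exp (-(2 * β * Jmin)))^b := (mul_pow _ _ _).symm
            _ ≤ (1/9:ℝ)^b := by
                apply pow_le_pow_left₀ (by positivity) hx
    _ ≤ 1/8 := geom_tail_bound M

lemma magn_abs_bound [Nonempty V] (τ : V → Bool) :
    (1:ℝ) - |magn (toSpin τ)| ≤
      2 * (min (Nup τ) (Ndown τ) : ℝ) / (Fintype.card V : ℝ) := by
  classical
  have hn0 : (0:ℝ) < (Fintype.card V : ℝ) := by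
    exact_mod_cast Fintype.card_pos
  have hsum : ∑ i : V, ((toSpin τ i : ℤ) : ℝ) = (Nup τ : ℝ) - (Ndown τ : ℝ) := by
    have h1 : ∀ i : V, ((toSpin τ i : ℤ) : ℝ) = if τ i = true then (1:ℝ) else -1 := by
      intro i; unfold toSpin; split <;> simp_all
    rw [Finset.sum_congr rfl (fun i _ => h1 i), Finset.sum_ite, Finset.sum_const,
      Finset.sum_const, nsmul_eq_mul, nsmul_eq_mul]
    have h2 : Finset.univ.filter (fun v : V => ¬(τ v = true))
        = Finset.univ.filter (fun v : V => τ v = false) :=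
      Finset.filter_congr (fun v _ => by simp)
    rw [h2, Nup, Ndown]
    ring
  have hcard : (Nup τ : ℝ) + (Ndown τ : ℝ) = (Fintype.card V : ℝ) := by
    have h := Finset.card_filter_add_card_filter_not
      (s := (Finset.univ : Finset V)) (p := fun v => τ v = true)
    have h2 : Finset.univ.filter (fun v : V => ¬(τ v = true))
        = Finset.univ.filter (fun v : V => τ v = false) :=
      Finset.filter_congr (fun v _ => by simp)
    rw [h2] at h
    rw [Nup, Ndown]
    exact_mod_cast congrArg (Nat.cast (R := ℝ)) (by simpa using h)
  have key : (Fintype.card V : ℝ) - |(Nup τ : ℝ) - (Ndown τ : ℝ)|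
      ≤ 2 * (min (Nup τ) (Ndown τ) : ℝ) := by
    rcases le_total (Nup τ) (Ndown τ) with h | h
    · have hle : (Nup τ : ℝ) ≤ (Ndown τ : ℝ) := Nat.cast_le.mpr h
      rw [min_eq_left hle, abs_of_nonpos (sub_nonpos.mpr hle)]
      linarith
    · have hle : (Ndown τ : ℝ) ≤ (Nup τ : ℝ) := Nat.cast_le.mpr h
      rw [min_eq_right hle, abs_of_nonneg (sub_nonneg.mpr hle)]
      linarith
  have hmagn : |magn (toSpin τ)| = |(Nup τ : ℝ) - (Ndown τ : ℝ)| / (Fintype.card V : ℝ) := by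
    rw [magn, hsum, abs_div, abs_of_pos hn0]
  rw [hmagn]
  rw [show (1:ℝ) - |(Nup τ : ℝ) - (Ndown τ : ℝ)| / (Fintype.card V : ℝ)
      = ((Fintype.card V : ℝ) - |(Nup τ : ℝ) - (Ndown τ : ℝ)|) / (Fintype.card V : ℝ) by
    field_simp]
  exact div_le_div_of_nonneg_right key hn0.le

end Assemble

/-- finite-volume form of the generalized Peierls–Griffiths theorem: if
`A · exp(−2 β Jmin) ≤ 1/9` then for every finite connected graph with couplings at
least `Jmin` and `μ^p(b) ≤ A^b`, the Gibbs expectation of `|M|` is at least `1/2`,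
uniformly in the size of the graph. -/
theorem stmt_8 (A Jmin β : ℝ) (hA : 1 ≤ A) (hJmin : 0 < Jmin) (hβ : 0 < β)
    (hsmall : A * Real.exp (-2 * β * Jmin) ≤ 1 / 9) :
    ∀ (V : Type) [Fintype V] [DecidableEq V] (G : SimpleGraph V) [DecidableRel G.Adj],
      G.Connected →
      ∀ J : Sym2 V → ℝ, (∀ e ∈ G.edgeFinset, Jmin ≤ J e) →
      (∀ p : V, ∀ b : ℕ, 1 ≤ b → (mu G p b : ℝ) ≤ A ^ b) →
      gibbsExp G J β (fun σ => |magn σ|) ≥ 1 / 2 := by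
  intro V _ _ G _ hGconn J hJ hmu
  classical
  have hV : Nonempty V := hGconn.nonempty
  have hn0 : (0:ℝ) < (Fintype.card V : ℝ) := by exact_mod_cast Fintype.card_pos
  have hZpos : 0 < partitionZ G J β := partitionZ_pos G J β
  have hx : A * Real.exp (-(2 * β * Jmin)) ≤ 1/9 := by
    have h : (-2 * β * Jmin) = -(2 * β * Jmin) := by ring
    rwa [h] at hsmall
  have hperp : ∀ p : V, ∑ τ : V → Bool, (borderCount G τ p : ℝ) *
      Real.exp (-β * hamiltonian G J (toSpin τ)) ≤ partitionZ G J β / 8 := by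
    intro p
    have hbc : ∀ τ : V → Bool, (borderCount G τ p : ℝ) =
        ∑ B ∈ Finset.univ.filter (fun B : Finset (Sym2 V) => InternalTo G p ↑B),
          (if (↑B : Set (Sym2 V)) ⊆ disagreeSet G (toSpin τ) then (1:ℝ) else 0) := by
      intro τ
      rw [borderCount, Finset.card_filter]
      push_cast
      rw [Finset.sum_filter]
      apply Finset.sum_congr rfl
      intro B _
      by_cases h1 : InternalTo G p ↑B <;>
        by_cases h2 : (↑B : Set (Sym2 V)) ⊆ disagreeSet G (toSpin τ) <;>
        simp [h1, h2]
    calc ∑ τ : V → Bool, (borderCount G τ p : ℝ) *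
          Real.exp (-β * hamiltonian G J (toSpin τ))
        = ∑ τ : V → Bool, ∑ B ∈ Finset.univ.filter
            (fun B : Finset (Sym2 V) => InternalTo G p ↑B),
            (if (↑B : Set (Sym2 V)) ⊆ disagreeSet G (toSpin τ) then (1:ℝ) else 0) *
              Real.exp (-β * hamiltonian G J (toSpin τ)) :=
          Finset.sum_congr rfl (fun τ _ => by rw [hbc τ, Finset.sum_mul])
      _ = ∑ B ∈ Finset.univ.filter (fun B : Finset (Sym2 V) => InternalTo G p ↑B),
            ∑ τ : V → Bool,
            (if (↑B : Set (Sym2 V)) ⊆ disagreeSet G (toSpin τ) then (1:ℝ) else 0) *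
              Real.exp (-β * hamiltonian G J (toSpin τ)) := Finset.sum_comm
      _ = ∑ B ∈ Finset.univ.filter (fun B : Finset (Sym2 V) => InternalTo G p ↑B),
            ∑ τ ∈ Finset.univ.filter (fun τ : V → Bool =>
              (↑B : Set (Sym2 V)) ⊆ disagreeSet G (toSpin τ)),
            Real.exp (-β * hamiltonian G J (toSpin τ)) := by
          apply Finset.sum_congr rfl
          intro B _
          rw [Finset.sum_filter]
          apply Finset.sum_congr rfl
          intro τ _
          by_cases h2 : (↑B : Set (Sym2 V)) ⊆ disagreeSet G (toSpin τ) <;> simp [h2]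
      _ ≤ ∑ B ∈ Finset.univ.filter (fun B : Finset (Sym2 V) => InternalTo G p ↑B),
            Real.exp (-(2 * β * Jmin) * (B.card : ℝ)) * partitionZ G J β := by
          apply Finset.sum_le_sum
          intro B hB
          have hint := (Finset.mem_filter.mp hB).2
          obtain ⟨P₁, P₂, hIB, _, _⟩ := hint
          exact peierls_bound G J β Jmin hβ hJ hJmin ⟨P₁, P₂, hIB⟩
      _ = (∑ B ∈ Finset.univ.filter (fun B : Finset (Sym2 V) => InternalTo G p ↑B),
            Real.exp (-(2 * β * Jmin) * (B.card : ℝ))) * partitionZ G J β :=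
          (Finset.sum_mul _ _ _).symm
      _ ≤ (1/8) * partitionZ G J β := by
          apply mul_le_mul_of_nonneg_right
            (border_sum_bound hGconn hA hβ hJmin hx p (hmu p)) hZpos.le
      _ = partitionZ G J β / 8 := by ring
  have hmain : ∑ τ : V → Bool, ((1:ℝ) - |magn (toSpin τ)|) *
      Real.exp (-β * hamiltonian G J (toSpin τ)) ≤ partitionZ G J β / 4 := by
    have hstep1 : ∀ τ : V → Bool, ((1:ℝ) - |magn (toSpin τ)|) *
        Real.exp (-β * hamiltonian G J (toSpin τ)) ≤
        (2 / (Fintype.card V : ℝ)) * ((∑ p : V, (borderCount G τ p : ℝ)) *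
          Real.exp (-β * hamiltonian G J (toSpin τ))) := by
      intro τ
      rw [← mul_assoc]
      apply mul_le_mul_of_nonneg_right _ (Real.exp_nonneg _)
      calc (1:ℝ) - |magn (toSpin τ)|
          ≤ 2 * (min (Nup τ) (Ndown τ) : ℝ) / (Fintype.card V : ℝ) :=
            magn_abs_bound τ
        _ ≤ 2 / (Fintype.card V : ℝ) * ∑ p : V, (borderCount G τ p : ℝ) := by
            rw [mul_comm (2:ℝ), mul_div_assoc, mul_comm _ (2 / (Fintype.card V : ℝ))]
            apply mul_le_mul_of_nonneg_left _ (by positivity)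
            have h1 : (min (Nup τ) (Ndown τ) : ℝ) ≤ ((∑ p : V, borderCount G τ p : ℕ) : ℝ) := by
              rw [show (min (Nup τ) (Ndown τ) : ℝ) = ((min (Nup τ) (Ndown τ) : ℕ) : ℝ) by
                push_cast; rfl]
              exact_mod_cast main_counting G hGconn τ
            calc (min (Nup τ) (Ndown τ) : ℝ)
                ≤ ((∑ p : V, borderCount G τ p : ℕ) : ℝ) := h1
              _ = ∑ p : V, (borderCount G τ p : ℝ) := by push_cast; rfl
    calc ∑ τ : V → Bool, ((1:ℝ) - |magn (toSpin τ)|) *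
          Real.exp (-β * hamiltonian G J (toSpin τ))
        ≤ ∑ τ : V → Bool, (2 / (Fintype.card V : ℝ)) *
            ((∑ p : V, (borderCount G τ p : ℝ)) *
              Real.exp (-β * hamiltonian G J (toSpin τ))) :=
          Finset.sum_le_sum (fun τ _ => hstep1 τ)
      _ = (2 / (Fintype.card V : ℝ)) * ∑ p : V, ∑ τ : V → Bool,
            (borderCount G τ p : ℝ) * Real.exp (-β * hamiltonian G J (toSpin τ)) := by
          rw [← Finset.mul_sum]
          congr 1
          rw [Finset.sum_comm]
          apply Finset.sum_congr rfl
          intro τ _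
          rw [Finset.sum_mul]
      _ ≤ (2 / (Fintype.card V : ℝ)) * ∑ _p : V, partitionZ G J β / 8 := by
          apply mul_le_mul_of_nonneg_left
            (Finset.sum_le_sum (fun p _ => hperp p)) (by positivity)
      _ = (2 / (Fintype.card V : ℝ)) *
            ((Fintype.card V : ℝ) * (partitionZ G J β / 8)) := by
          rw [Finset.sum_const, Finset.card_univ, nsmul_eq_mul]
      _ = partitionZ G J β / 4 := by
          field_simp
          ring
  have hZsum : ∑ τ : V → Bool, Real.exp (-β * hamiltonian G J (toSpin τ))
      = partitionZ G J β := rfl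
  have hnum : partitionZ G J β / 2 ≤ ∑ τ : V → Bool,
      |magn (toSpin τ)| * Real.exp (-β * hamiltonian G J (toSpin τ)) := by
    have hsplit : ∑ τ : V → Bool,
        |magn (toSpin τ)| * Real.exp (-β * hamiltonian G J (toSpin τ))
        = (∑ τ : V → Bool, Real.exp (-β * hamiltonian G J (toSpin τ)))
          - ∑ τ : V → Bool, ((1:ℝ) - |magn (toSpin τ)|) *
              Real.exp (-β * hamiltonian G J (toSpin τ)) := by
      rw [← Finset.sum_sub_distrib]
      apply Finset.sum_congr rfl
      intro τ _
      ring
    rw [hsplit, hZsum]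
    linarith
  rw [gibbsExp, ge_iff_le, le_div_iff₀ hZpos]
  linarith

end PG
end
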